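/- arXiv:1609.08672 — 10 statements merged into one kernel-verified Lean document; each statement's English description precedes it below -/
import Mathlib

section
/- There are no finite constants c₂ ≥ 0, κ > 0 and ε₀ > 0 with the following property: for every ε ∈ (0, ε₀), every filtered probability space, and every pair f, g of discrete-time real-valued martingales such that g is differentially subordinate to f, both are L²-bounded, f_n → F and g_n → G almost surely, and ‖g‖_2 ≥ (1−ε)·‖f‖_2, one has ‖ |G| − |F| ‖_{L²(Ω)} ≤ c₂ · ε^κ · ‖f‖_2. -/
open MeasureTheory Filter
open scoped ENNReal NNReal

namespace Stmt6Aux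
open Set

abbrev Om := Bool × Bool
noncomputable def mu : Measure Om := (PMF.uniformOfFintype Om).toMeasure
instance : IsProbabilityMeasure mu := PMF.toMeasure.isProbabilityMeasure _
lemma measAll (s : Set Om) : MeasurableSet s := s.to_countable.measurableSet
lemma mu_singleton (x : Om) : mu {x} = 4⁻¹ := by
  rw [mu, PMF.toMeasure_apply_singleton _ _ (measAll _), PMF.uniformOfFintype_apply]
  norm_num

noncomputable def chi (b : Bool) : ℝ := if b then 1 else -1
noncomputable def X1 : Om → ℝ := fun ω => chi ω.1
noncomputable def X2 : Om → ℝ := fun ω => chi ω.2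

def Filt : Filtration ℕ (inferInstance : MeasurableSpace Om) where
  seq n := if n = 0 then ⊥ else if n = 1 then MeasurableSpace.comap Prod.fst ⊤ else ⊤
  mono' := by
    intro i j hij
    dsimp only
    split_ifs <;> first | exact bot_le | exact le_top | exact le_rfl | omega
  le' n := by
    split_ifs
    · exact bot_le
    · exact fun s _ => measAll s
    · exact fun s _ => measAll s

lemma Filt_zero : (Filt 0 : MeasurableSpace Om) = ⊥ := rfl
lemma Filt_one : (Filt 1 : MeasurableSpace Om) = MeasurableSpace.comap Prod.fst ⊤ := rfl
lemma Filt_two (k : ℕ) : (Filt (k+2) : MeasurableSpace Om) = ⊤ := rfl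

noncomputable def ff : ℕ → Om → ℝ := fun n => if n = 0 then 0 else if n = 1 then X1 else X1 + X2
noncomputable def gg : ℕ → Om → ℝ := fun n => if n = 0 then 0 else if n = 1 then X1 else X1 - X2

lemma X1_meas : StronglyMeasurable[MeasurableSpace.comap Prod.fst ⊤] X1 := by
  have h1 : Measurable[MeasurableSpace.comap Prod.fst ⊤] (Prod.fst : Om → Bool) :=
    measurable_iff_comap_le.mpr le_rfl
  exact ((measurable_of_countable chi).comp h1).stronglyMeasurable

lemma int_eq_f (n : ℕ) (s : Set Om) (hs : MeasurableSet[Filt n] s) :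
    ∫ x in s, ff n x ∂mu = ∫ x in s, ff (n+1) x ∂mu := by
  match n with
  | 0 =>
    rw [Filt_zero] at hs
    rcases MeasurableSpace.measurableSet_bot_iff.mp hs with rfl | rfl
    · simp
    · rw [Measure.restrict_univ, integral_fintype Integrable.of_finite,
        integral_fintype Integrable.of_finite]
      simp [Fintype.sum_prod_type, ff, X1, chi, mu_singleton, measureReal_def]
  | 1 =>
    rw [Filt_one] at hs
    obtain ⟨t, -, rfl⟩ := hs
    rw [← integral_indicator (measAll _), ← integral_indicator (measAll _),
      integral_fintype Integrable.of_finite, integral_fintype Integrable.of_finite]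
    by_cases h1 : true ∈ t <;> by_cases h2 : false ∈ t <;>
      simp [Fintype.sum_prod_type, ff, X1, X2, chi, mu_singleton, measureReal_def, indicator_apply, h1, h2] <;>
      norm_num
  | (k+2) => rfl

lemma int_eq_g (n : ℕ) (s : Set Om) (hs : MeasurableSet[Filt n] s) :
    ∫ x in s, gg n x ∂mu = ∫ x in s, gg (n+1) x ∂mu := by
  match n with
  | 0 =>
    rw [Filt_zero] at hs
    rcases MeasurableSpace.measurableSet_bot_iff.mp hs with rfl | rfl
    · simp
    · rw [Measure.restrict_univ, integral_fintype Integrable.of_finite,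
        integral_fintype Integrable.of_finite]
      simp [Fintype.sum_prod_type, gg, X1, chi, mu_singleton, measureReal_def]
  | 1 =>
    rw [Filt_one] at hs
    obtain ⟨t, -, rfl⟩ := hs
    rw [← integral_indicator (measAll _), ← integral_indicator (measAll _),
      integral_fintype Integrable.of_finite, integral_fintype Integrable.of_finite]
    by_cases h1 : true ∈ t <;> by_cases h2 : false ∈ t <;>
      simp [Fintype.sum_prod_type, gg, X1, X2, chi, mu_singleton, measureReal_def, indicator_apply, h1, h2] <;>
      norm_num
  | (k+2) => rfl

lemma adapted_f : StronglyAdapted Filt ff := by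
  intro n
  match n with
  | 0 => exact stronglyMeasurable_const
  | 1 => exact X1_meas
  | (k+2) => exact measurable_from_top.stronglyMeasurable

lemma adapted_g : StronglyAdapted Filt gg := by
  intro n
  match n with
  | 0 => exact stronglyMeasurable_const
  | 1 => exact X1_meas
  | (k+2) => exact measurable_from_top.stronglyMeasurable

lemma asm' (n : ℕ) (h : ℕ → Om → ℝ) (had : StronglyAdapted Filt h) :
    AEStronglyMeasurable[Filt n] (h n) mu :=
  StronglyMeasurable.aestronglyMeasurable (had n)

lemma mart_f : Martingale ff Filt mu := by
  refine martingale_nat adapted_f (fun _ => Integrable.of_finite) fun n => ?_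
  exact ae_eq_condExp_of_forall_setIntegral_eq (Filt.le n) Integrable.of_finite
    (fun s _ _ => Integrable.of_finite.integrableOn) (fun s hs _ => int_eq_f n s hs)
    (asm' n ff adapted_f)

lemma mart_g : Martingale gg Filt mu := by
  refine martingale_nat adapted_g (fun _ => Integrable.of_finite) fun n => ?_
  exact ae_eq_condExp_of_forall_setIntegral_eq (Filt.le n) Integrable.of_finite
    (fun s _ _ => Integrable.of_finite.integrableOn) (fun s hs _ => int_eq_g n s hs)
    (asm' n gg adapted_g)

lemma four_inv : (4:ℝ≥0∞) * 4⁻¹ = 1 := ENNReal.mul_inv_cancel (by norm_num) (by norm_num)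

lemma elp (h : Om → ℝ) :
    eLpNorm h 2 mu = (∑ x : Om, (‖h x‖₊ : ℝ≥0∞) ^ (2:ℝ) * mu {x}) ^ (1/2 : ℝ) := by
  rw [eLpNorm_eq_lintegral_rpow_enorm_toReal (by norm_num) (by norm_num), lintegral_fintype]
  norm_num [enorm_eq_nnnorm]

lemma elp_add : eLpNorm (X1 + X2) 2 mu = (2:ℝ≥0∞) ^ (1/2:ℝ) := by
  rw [elp]
  have h : (∑ x : Om, (‖(X1 + X2) x‖₊ : ℝ≥0∞) ^ (2:ℝ) * mu {x}) = 2 := by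
    simp [Fintype.sum_prod_type, X1, X2, chi, mu_singleton]
    norm_num [← ENNReal.rpow_natCast, four_inv, ← two_mul]
  rw [h]

lemma elp_sub : eLpNorm (X1 - X2) 2 mu = (2:ℝ≥0∞) ^ (1/2:ℝ) := by
  rw [elp]
  have h : (∑ x : Om, (‖(X1 - X2) x‖₊ : ℝ≥0∞) ^ (2:ℝ) * mu {x}) = 2 := by
    simp [Fintype.sum_prod_type, X1, X2, chi, mu_singleton]
    norm_num [← ENNReal.rpow_natCast, four_inv, ← two_mul]
  rw [h]

lemma elp_X1 : eLpNorm X1 2 mu = 1 := by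
  rw [elp]
  have h : (∑ x : Om, (‖X1 x‖₊ : ℝ≥0∞) ^ (2:ℝ) * mu {x}) = 1 := by
    simp [Fintype.sum_prod_type, X1, chi, mu_singleton]
    rw [show 4⁻¹+4⁻¹+((4:ℝ≥0∞)⁻¹+4⁻¹) = 4*4⁻¹ by ring, four_inv]
  rw [h, ENNReal.one_rpow]

lemma elp_diff :
    eLpNorm (fun ω => |(X1 - X2) ω| - |(X1 + X2) ω|) 2 mu = 2 := by
  rw [elp]
  have h : (∑ x : Om, (‖|(X1 - X2) x| - |(X1 + X2) x|‖₊ : ℝ≥0∞) ^ (2:ℝ) * mu {x}) = 4 := by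
    simp [Fintype.sum_prod_type, X1, X2, chi, mu_singleton]
    norm_num [← ENNReal.rpow_natCast, four_inv, ← two_mul]
  rw [h]
  rw [show (4:ℝ≥0∞) = 2 ^ (2:ℝ) by norm_num [← ENNReal.rpow_natCast], ← ENNReal.rpow_mul]
  norm_num

lemma one_le_sqrt2 : (1:ℝ≥0∞) ≤ 2 ^ (1/2:ℝ) := by
  rw [← ENNReal.one_rpow (1/2:ℝ)]
  exact ENNReal.rpow_le_rpow one_le_two (by norm_num)

lemma sup_f : (⨆ n, eLpNorm (ff n) 2 mu) = (2:ℝ≥0∞) ^ (1/2:ℝ) := by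
  apply le_antisymm
  · refine iSup_le fun n => ?_
    match n with
    | 0 => rw [show ff 0 = (0 : Om → ℝ) from rfl, eLpNorm_zero]; exact zero_le
    | 1 => rw [show ff 1 = X1 from rfl, elp_X1]; exact one_le_sqrt2
    | (k+2) => rw [show ff (k+2) = X1 + X2 from rfl, elp_add]
  · have h2 : eLpNorm (ff 2) 2 mu = (2:ℝ≥0∞) ^ (1/2:ℝ) := by
      rw [show ff 2 = X1 + X2 from rfl, elp_add]
    rw [← h2]
    exact le_iSup (fun n => eLpNorm (ff n) 2 mu) 2

lemma sup_g : (⨆ n, eLpNorm (gg n) 2 mu) = (2:ℝ≥0∞) ^ (1/2:ℝ) := by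
  apply le_antisymm
  · refine iSup_le fun n => ?_
    match n with
    | 0 => rw [show gg 0 = (0 : Om → ℝ) from rfl, eLpNorm_zero]; exact zero_le
    | 1 => rw [show gg 1 = X1 from rfl, elp_X1]; exact one_le_sqrt2
    | (k+2) => rw [show gg (k+2) = X1 - X2 from rfl, elp_sub]
  · have h2 : eLpNorm (gg 2) 2 mu = (2:ℝ≥0∞) ^ (1/2:ℝ) := by
      rw [show gg 2 = X1 - X2 from rfl, elp_sub]
    rw [← h2]
    exact le_iSup (fun n => eLpNorm (gg n) 2 mu) 2

lemma sqrt2_lt_top : (2:ℝ≥0∞) ^ (1/2:ℝ) < ⊤ :=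
  ENNReal.rpow_lt_top_of_nonneg (by norm_num) (by norm_num)

lemma sqrt2_lt_two : (2:ℝ≥0∞) ^ (1/2:ℝ) < 2 := by
  have := ENNReal.rpow_lt_rpow_of_exponent_lt (x := 2) (by norm_num) (by norm_num)
    (by norm_num : (1/2:ℝ) < 1)
  rwa [ENNReal.rpow_one] at this

lemma tend_f : ∀ ω, Tendsto (fun n => ff n ω) atTop (nhds ((X1 + X2) ω)) := by
  intro ω
  refine tendsto_atTop_of_eventually_const (i₀ := 2) fun i hi => ?_
  have h0 : i ≠ 0 := by omega
  have h1 : i ≠ 1 := by omega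
  simp [ff, h0, h1]

lemma tend_g : ∀ ω, Tendsto (fun n => gg n ω) atTop (nhds ((X1 - X2) ω)) := by
  intro ω
  refine tendsto_atTop_of_eventually_const (i₀ := 2) fun i hi => ?_
  have h0 : i ≠ 0 := by omega
  have h1 : i ≠ 1 := by omega
  simp [gg, h0, h1]

lemma subord (n : ℕ) (ω : Om) : |gg (n+1) ω - gg n ω| ≤ |ff (n+1) ω - ff n ω| := by
  match n with
  | 0 => simp [ff, gg]
  | 1 =>
    show |(X1 - X2) ω - X1 ω| ≤ |(X1 + X2) ω - X1 ω|
    simp only [Pi.sub_apply, Pi.add_apply]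
    rw [show X1 ω - X2 ω - X1 ω = -(X2 ω) by ring, show X1 ω + X2 ω - X1 ω = X2 ω by ring,
      abs_neg]
  | (k+2) =>
    show |(X1 - X2) ω - (X1 - X2) ω| ≤ |(X1 + X2) ω - (X1 + X2) ω|
    simp

end Stmt6Aux

open Stmt6Aux in
theorem stmt_6 :
    ¬ ∃ (c₂ κ ε₀ : ℝ), 0 ≤ c₂ ∧ 0 < κ ∧ 0 < ε₀ ∧
      ∀ (ε : ℝ), 0 < ε → ε < ε₀ →
      ∀ (Ω : Type) (m0 : MeasurableSpace Ω) (μ : Measure Ω), IsProbabilityMeasure μ →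
      ∀ (ℱ : Filtration ℕ m0) (f g : ℕ → Ω → ℝ),
        Martingale f ℱ μ → Martingale g ℱ μ →
        (∀ᵐ ω ∂μ, |g 0 ω| ≤ |f 0 ω|) →
        (∀ n : ℕ, ∀ᵐ ω ∂μ, |g (n + 1) ω - g n ω| ≤ |f (n + 1) ω - f n ω|) →
        (⨆ n, eLpNorm (f n) 2 μ) < ⊤ →
        (⨆ n, eLpNorm (g n) 2 μ) < ⊤ →
        ∀ (F G : Ω → ℝ),
          (∀ᵐ ω ∂μ, Tendsto (fun n => f n ω) atTop (nhds (F ω))) →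
          (∀ᵐ ω ∂μ, Tendsto (fun n => g n ω) atTop (nhds (G ω))) →
          ENNReal.ofReal (1 - ε) * (⨆ n, eLpNorm (f n) 2 μ) ≤
            (⨆ n, eLpNorm (g n) 2 μ) →
          eLpNorm (fun ω => |G ω| - |F ω|) 2 μ ≤
            ENNReal.ofReal (c₂ * ε ^ κ) * ⨆ n, eLpNorm (f n) 2 μ := by
  rintro ⟨c₂, κ, ε₀, hc₂, hκ, hε₀, H⟩
  have hc1 : (0:ℝ) < c₂ + 1 := by linarith
  set ε := min (ε₀ / 2) ((c₂ + 1)⁻¹ ^ κ⁻¹) with hεdef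
  have hεpos : 0 < ε := lt_min (by linarith) (Real.rpow_pos_of_pos (by positivity) _)
  have hεlt : ε < ε₀ := lt_of_le_of_lt (min_le_left _ _) (by linarith)
  have key := H ε hεpos hεlt Om inferInstance mu inferInstance Filt ff gg mart_f mart_g
    (Filter.Eventually.of_forall fun ω => by simp [ff, gg])
    (fun n => Filter.Eventually.of_forall fun ω => subord n ω)
    (by rw [sup_f]; exact sqrt2_lt_top) (by rw [sup_g]; exact sqrt2_lt_top)
    (X1 + X2) (X1 - X2)
    (Filter.Eventually.of_forall tend_f) (Filter.Eventually.of_forall tend_g)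
    (by
      rw [sup_f, sup_g]
      calc ENNReal.ofReal (1 - ε) * (2:ℝ≥0∞) ^ (1/2:ℝ)
          ≤ 1 * (2:ℝ≥0∞) ^ (1/2:ℝ) :=
            mul_le_mul_left (ENNReal.ofReal_le_one.mpr (by linarith)) _
        _ = (2:ℝ≥0∞) ^ (1/2:ℝ) := one_mul _)
  rw [sup_f, elp_diff] at key
  have h1 : ε ^ κ ≤ ((c₂ + 1)⁻¹ ^ κ⁻¹) ^ κ :=
    Real.rpow_le_rpow hεpos.le (min_le_right _ _) hκ.le
  have h2 : ((c₂ + 1)⁻¹ ^ κ⁻¹) ^ κ = (c₂ + 1)⁻¹ := by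
    rw [← Real.rpow_mul (by positivity : (0:ℝ) ≤ (c₂ + 1)⁻¹), inv_mul_cancel₀ hκ.ne',
      Real.rpow_one]
  have hlt1 : c₂ * ε ^ κ ≤ c₂ * (c₂ + 1)⁻¹ :=
    mul_le_mul_of_nonneg_left (h1.trans_eq h2) hc₂
  have hle1 : c₂ * ε ^ κ ≤ 1 := by
    refine hlt1.trans ?_
    rw [← div_eq_mul_inv, div_le_one hc1]
    linarith
  have : (2:ℝ≥0∞) ≤ (2:ℝ≥0∞) ^ (1/2:ℝ) := by
    refine key.trans ?_
    calc ENNReal.ofReal (c₂ * ε ^ κ) * (2:ℝ≥0∞) ^ (1/2:ℝ)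
        ≤ 1 * (2:ℝ≥0∞) ^ (1/2:ℝ) := mul_le_mul_left (ENNReal.ofReal_le_one.mpr hle1) _
      _ = (2:ℝ≥0∞) ^ (1/2:ℝ) := one_mul _
  exact absurd this (not_le.mpr sqrt2_lt_two)
end

section
/- For every real p with 1 < p ≤ 2, one has p^{2−p}·(p−1)^{p−1}·(2−p)/2 ≥ 1 − p·(1 − 1/p)^{p−1}. -/
lemma aux1 (t : ℝ) (h0 : 0 ≤ t) (h1 : t < 1) : t + t^2/2 ≤ -Real.log (1 - t) := by
  have hder : ∀ x ∈ Set.Ioo (0:ℝ) t, HasDerivAt (fun x : ℝ => -Real.log (1 - x) - x - x^2/2)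
      (-((-1)/(1-x)) - 1 - x) x := by
    intro x hx
    have hx1 : (1:ℝ) - x > 0 := by cases hx; linarith
    have hh1 : HasDerivAt (fun x : ℝ => 1 - x) (-1) x := by
      simpa using (hasDerivAt_id x).const_sub 1
    have h2 := (hh1.log (ne_of_gt hx1)).neg
    have h3 : HasDerivAt (fun x : ℝ => x^2/2) x x := by
      have := (hasDerivAt_pow 2 x).div_const 2
      simpa using this
    exact (h2.sub (hasDerivAt_id x)).sub h3
  have key : MonotoneOn (fun x : ℝ => -Real.log (1 - x) - x - x^2/2) (Set.Icc 0 t) := by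
    apply monotoneOn_of_deriv_nonneg (convex_Icc 0 t)
    · apply ContinuousOn.sub
      apply ContinuousOn.sub
      · apply ContinuousOn.neg
        apply ContinuousOn.log (by fun_prop)
        intro x hx
        simp only [Set.mem_Icc] at hx
        nlinarith [hx.1, hx.2]
      · fun_prop
      · fun_prop
    · intro x hx
      rw [interior_Icc] at hx
      exact ((hder x hx).differentiableAt).differentiableWithinAt
    · intro x hx
      rw [interior_Icc] at hx
      rw [(hder x hx).deriv]
      have hx1 : (1:ℝ) - x > 0 := by cases hx; linarith
      have : -((-1)/(1-x)) - 1 - x = x^2/(1-x) := by field_simp; ring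
      rw [this]; positivity
  have h := key (Set.left_mem_Icc.mpr h0) (Set.right_mem_Icc.mpr h0) h0
  simp at h
  linarith

lemma aux2 (t : ℝ) (h0 : 0 ≤ t) (h1 : t < 1) :
    -t + t^2/2 + t^3/6 ≤ (1 - t) * Real.log (1 - t) := by
  have hder : ∀ x ∈ Set.Ioo (0:ℝ) t, HasDerivAt
      (fun x : ℝ => (1 - x) * Real.log (1 - x) + x - x^2/2 - x^3/6)
      (-Real.log (1-x) - x - x^2/2) x := by
    intro x hx
    have hx1 : (1:ℝ) - x > 0 := by cases hx; linarith
    have hh1 : HasDerivAt (fun x : ℝ => 1 - x) (-1) x := by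
      simpa using (hasDerivAt_id x).const_sub 1
    have h2 : HasDerivAt (fun x : ℝ => (1 - x) * Real.log (1 - x))
        ((-1) * Real.log (1 - x) + (1 - x) * ((-1)/(1-x))) x :=
      hh1.mul (hh1.log (ne_of_gt hx1))
    have h3 : HasDerivAt (fun x : ℝ => x^2/2) x x := by
      have := (hasDerivAt_pow 2 x).div_const 2
      simpa using this
    have h4 : HasDerivAt (fun x : ℝ => x^3/6) (x^2/2) x := by
      have := (hasDerivAt_pow 3 x).div_const 6
      norm_num at this
      exact this.congr_deriv (by ring)
    have := ((h2.add (hasDerivAt_id x)).sub h3).sub h4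
    refine this.congr_deriv ?_
    field_simp
    ring
  have key : MonotoneOn (fun x : ℝ => (1 - x) * Real.log (1 - x) + x - x^2/2 - x^3/6)
      (Set.Icc 0 t) := by
    apply monotoneOn_of_deriv_nonneg (convex_Icc 0 t)
    · apply ContinuousOn.sub
      apply ContinuousOn.sub
      apply ContinuousOn.add
      · apply ContinuousOn.mul (by fun_prop)
        apply ContinuousOn.log (by fun_prop)
        intro x hx
        simp only [Set.mem_Icc] at hx
        nlinarith [hx.1, hx.2]
      · fun_prop
      · fun_prop
      · fun_prop
    · intro x hx
      rw [interior_Icc] at hx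
      exact ((hder x hx).differentiableAt).differentiableWithinAt
    · intro x hx
      rw [interior_Icc] at hx
      rw [(hder x hx).deriv]
      obtain ⟨hxa, hxb⟩ := hx
      have := aux1 x (le_of_lt hxa) (by linarith)
      linarith
  have h := key (Set.left_mem_Icc.mpr h0) (Set.right_mem_Icc.mpr h0) h0
  simp at h
  linarith

theorem stmt_7 (p : ℝ) (hp1 : 1 < p) (hp2 : p ≤ 2) :
    p ^ (2 - p) * (p - 1) ^ (p - 1) * (2 - p) / 2 ≥ 1 - p * (1 - 1 / p) ^ (p - 1) := by
  have hp0 : (0:ℝ) < p := by linarith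
  have hs : (0:ℝ) < p - 1 := by linarith
  -- rewrite RHS
  have hA : p * (1 - 1/p) ^ (p-1) = p ^ (2-p) * (p-1) ^ (p-1) := by
    have h1 : (1 : ℝ) - 1/p = (p-1)/p := by field_simp
    rw [h1, Real.div_rpow (le_of_lt hs) (le_of_lt hp0)]
    have h2 : p ^ (2-p) * p ^ (p-1) = p := by
      rw [← Real.rpow_add hp0]
      norm_num
    have hpm : (0:ℝ) < p ^ (p-1) := Real.rpow_pos_of_pos hp0 _
    have h3 : p ^ (2-p) * (p-1)^(p-1) * p^(p-1) = p * (p-1)^(p-1) := by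
      calc p ^ (2-p) * (p-1)^(p-1) * p^(p-1) = (p^(2-p)*p^(p-1)) * (p-1)^(p-1) := by ring
      _ = p * (p-1)^(p-1) := by rw [h2]
    field_simp
    linarith [h3]
  set g := (2-p) * Real.log p + (p-1) * Real.log (p-1) with hg
  have hexp : p ^ (2-p) * (p-1) ^ (p-1) = Real.exp g := by
    rw [Real.rpow_def_of_pos hp0, Real.rpow_def_of_pos hs, ← Real.exp_add, hg]
    ring_nf
  have hge : 1 + g ≤ Real.exp g := by
    have := Real.add_one_le_exp g
    linarith
  have hL : 1 - p⁻¹ ≤ Real.log p := Real.one_sub_inv_le_log_of_pos hp0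
  have hM := aux2 (2-p) (by linarith) (by linarith)
  have hM' : -(2-p) + (2-p)^2/2 + (2-p)^3/6 ≤ (p-1) * Real.log (p-1) := by
    have : (1:ℝ) - (2-p) = p - 1 := by ring
    rwa [this] at hM
  have hgG : (2-p) * (1 - p⁻¹) + (-(2-p) + (2-p)^2/2 + (2-p)^3/6) ≤ g := by
    have h2p : (0:ℝ) ≤ 2 - p := by linarith
    have := mul_le_mul_of_nonneg_left hL h2p
    linarith
  have hpoly : 2 ≤ (1 + ((2-p) * (1 - p⁻¹) + (-(2-p) + (2-p)^2/2 + (2-p)^3/6))) * (4-p) := by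
    have hinv : p⁻¹ * p = 1 := inv_mul_cancel₀ (ne_of_gt hp0)
    nlinarith [sq_nonneg (2-p), sq_nonneg ((2-p)^2), mul_pos hp0 hp0, sq_nonneg (p-1),
      mul_nonneg (mul_nonneg (sub_nonneg.mpr hp2) (sub_nonneg.mpr hp2)) (sub_nonneg.mpr hp2)]
  have key : 2 ≤ p ^ (2-p) * (p-1) ^ (p-1) * (4-p) := by
    rw [hexp]
    have h4p : (0:ℝ) ≤ 4 - p := by linarith
    calc 2 ≤ (1 + ((2-p) * (1 - p⁻¹) + (-(2-p) + (2-p)^2/2 + (2-p)^3/6))) * (4-p) := hpoly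
    _ ≤ (1 + g) * (4-p) := by nlinarith [hgG]
    _ ≤ Real.exp g * (4-p) := by nlinarith [hge]
  rw [ge_iff_le, hA]
  nlinarith [key]
end

section
/- Let H be a real (separable) Hilbert space, let 1 < p < 2, and define U_p : H × H → ℝ by U_p(x,y) = p(1−1/p)^{p−1}·((p−1)‖y‖ − ‖x‖)·(‖x‖+‖y‖)^{p−1}. Then for all x, y ∈ H with (x,y) ≠ (0,0), U_p(x,y) ≥ (p−1)^p ‖y‖^p − ‖x‖^p + (1 − p(1−1/p)^{p−1}) · ((p−1)‖y‖ − ‖x‖)² / (‖x‖+‖y‖)^{2−p}. -/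
open Real Set

set_option maxHeartbeats 1000000

noncomputable def Uc (p : ℝ) : ℝ := p * (1 - 1 / p) ^ (p - 1)

noncomputable def Uf (p r : ℝ) : ℝ :=
  Uc p * (p * r - 1) + (1 - r) ^ p - (p - 1) ^ p * r ^ p - (1 - Uc p) * (p * r - 1) ^ 2

noncomputable def Uf1 (p r : ℝ) : ℝ :=
  Uc p * p - p * (1 - r) ^ (p - 1) - (p - 1) ^ p * (p * r ^ (p - 1))
    - (1 - Uc p) * (2 * (p * r - 1) * p)

noncomputable def Uf2 (p r : ℝ) : ℝ :=
  p * ((p - 1) * (1 - r) ^ (p - 2)) - (p - 1) ^ p * (p * ((p - 1) * r ^ (p - 2)))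
    - (1 - Uc p) * (2 * p * p)

lemma hasDerivAt_Uf (p : ℝ) (hp1 : 1 < p) (r : ℝ) :
    HasDerivAt (fun s => Uf p s) (Uf1 p r) r := by
  have h1 : HasDerivAt (fun s : ℝ => p * s - 1) p r := by
    simpa using ((hasDerivAt_id r).const_mul p).sub_const 1
  have h2 : HasDerivAt (fun s : ℝ => (1 - s) ^ p) ((-1) * p * (1 - r) ^ (p - 1)) r :=
    ((hasDerivAt_id r).const_sub 1).rpow_const (Or.inr hp1.le)
  have h3 : HasDerivAt (fun s : ℝ => s ^ p) (p * r ^ (p - 1)) r :=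
    Real.hasDerivAt_rpow_const (Or.inr hp1.le)
  have h4 : HasDerivAt (fun s : ℝ => (p * s - 1) ^ 2) ((2 : ℕ) * (p * r - 1) ^ (2 - 1) * p) r :=
    h1.pow 2
  have := (((h1.const_mul (Uc p)).add h2).sub (h3.const_mul ((p - 1) ^ p))).sub
    (h4.const_mul (1 - Uc p))
  convert this using 1
  · rfl
  · rfl
  · rfl
  unfold Uf1
  push_cast
  ring

lemma hasDerivAt_Uf1 (p : ℝ) (hp1 : 1 < p) {r : ℝ} (hr : r ∈ Ioo (0:ℝ) 1) :
    HasDerivAt (fun s => Uf1 p s) (Uf2 p r) r := by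
  have hr1 : (1 : ℝ) - r ≠ 0 := by have := hr.2; intro h; linarith [sub_eq_zero.mp h]
  have h2 : HasDerivAt (fun s : ℝ => (1 - s) ^ (p - 1))
      ((-1) * (p - 1) * (1 - r) ^ (p - 1 - 1)) r :=
    ((hasDerivAt_id r).const_sub 1).rpow_const (Or.inl hr1)
  have h3 : HasDerivAt (fun s : ℝ => s ^ (p - 1)) ((p - 1) * r ^ (p - 1 - 1)) r :=
    Real.hasDerivAt_rpow_const (Or.inl hr.1.ne')
  have h4 : HasDerivAt (fun s : ℝ => 2 * (p * s - 1) * p) (2 * p * p) r := by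
    have : HasDerivAt (fun s : ℝ => p * s - 1) p r := by
      simpa using ((hasDerivAt_id r).const_mul p).sub_const 1
    simpa [mul_comm, mul_assoc] using (this.const_mul 2).mul_const p
  have := (((hasDerivAt_const r (Uc p * p)).sub (h2.const_mul p)).sub
    ((h3.const_mul p).const_mul ((p - 1) ^ p))).sub (h4.const_mul (1 - Uc p))
  convert this using 1
  · rfl
  · rfl
  · rfl
  unfold Uf2
  have he : p - 1 - 1 = p - 2 := by ring
  rw [he]
  ring

lemma Uf2_mono (p : ℝ) (hp1 : 1 < p) (hp2 : p < 2) {u v : ℝ}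
    (hu : u ∈ Ioo (0:ℝ) 1) (hv : v ∈ Ioo (0:ℝ) 1) (huv : u ≤ v) :
    Uf2 p u ≤ Uf2 p v := by
  have hA : (1 - u) ^ (p - 2) ≤ (1 - v) ^ (p - 2) :=
    Real.rpow_le_rpow_of_nonpos (by linarith [hv.2]) (by linarith) (by linarith)
  have hB : v ^ (p - 2) ≤ u ^ (p - 2) :=
    Real.rpow_le_rpow_of_nonpos hu.1 huv (by linarith)
  have hc1 : (0:ℝ) ≤ p * (p - 1) := by nlinarith
  have hc2 : (0:ℝ) ≤ (p - 1) ^ p * (p * (p - 1)) := by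
    have := Real.rpow_nonneg (by linarith : (0:ℝ) ≤ p - 1) p
    nlinarith
  unfold Uf2
  nlinarith [mul_le_mul_of_nonneg_left hA hc1, mul_le_mul_of_nonneg_left hB hc2]

lemma Uf_zero (p : ℝ) (hp1 : 1 < p) : Uf p 0 = 0 := by
  have hp0 : p ≠ 0 := by positivity
  unfold Uf
  rw [mul_zero, zero_sub, sub_zero, Real.one_rpow, Real.zero_rpow hp0]
  ring

lemma one_sub_inv_eq (p : ℝ) (hp1 : 1 < p) : (1 : ℝ) - 1 / p = (p - 1) * (1 / p) := by
  have hp0 : p ≠ 0 := by positivity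
  field_simp

lemma Uf_inv (p : ℝ) (hp1 : 1 < p) : Uf p (1 / p) = 0 := by
  have hp0 : (0:ℝ) < p := by positivity
  have hq : (0:ℝ) < p - 1 := by linarith
  have e2 : ((1:ℝ) - 1 / p) ^ p = (p - 1) ^ p * (1 / p) ^ p := by
    rw [one_sub_inv_eq p hp1, Real.mul_rpow hq.le (by positivity)]
  have h0 : p * (1 / p) - 1 = 0 := by field_simp; norm_num
  unfold Uf
  rw [e2, h0]
  ring

lemma Uf1_inv (p : ℝ) (hp1 : 1 < p) : Uf1 p (1 / p) = 0 := by
  have hp0 : (0:ℝ) < p := by positivity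
  have hq : (0:ℝ) < p - 1 := by linarith
  have e3 : ((p:ℝ) - 1) ^ p = (p - 1) ^ (p - 1) * (p - 1) := by
    rw [← Real.rpow_add_one hq.ne' (p - 1)]
    norm_num
  have e4 : ((1:ℝ) - 1 / p) ^ (p - 1) = (p - 1) ^ (p - 1) * (1 / p) ^ (p - 1) := by
    rw [one_sub_inv_eq p hp1, Real.mul_rpow hq.le (by positivity)]
  have h0 : p * (1 / p) - 1 = 0 := by field_simp; norm_num
  unfold Uf1 Uc
  rw [e3, e4, h0]
  ring

lemma Uf_nonneg (p : ℝ) (hp1 : 1 < p) (hp2 : p < 2) {r : ℝ}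
    (hr0 : 0 ≤ r) (hr1 : r ≤ 1) : 0 ≤ Uf p r := by
  have hp0 : (0:ℝ) < p := by positivity
  have hip : (0:ℝ) < 1 / p := by positivity
  have hip1 : 1 / p < 1 := by rw [div_lt_one hp0]; linarith
  have hcF : Continuous (fun s => Uf p s) :=
    continuous_iff_continuousAt.mpr fun s => (hasDerivAt_Uf p hp1 s).continuousAt
  have hcF1 : Continuous (fun s => Uf1 p s) := by
    unfold Uf1
    have c1 : Continuous (fun s : ℝ => (1 - s) ^ (p - 1)) :=
      (continuous_const.sub continuous_id).rpow_const fun x => Or.inr (by linarith)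
    have c2 : Continuous (fun s : ℝ => s ^ (p - 1)) :=
      continuous_id.rpow_const fun x => Or.inr (by linarith)
    fun_prop
  by_contra hcon
  push_neg at hcon
  have hF0 := Uf_zero p hp1
  have hFi := Uf_inv p hp1
  have hF1i := Uf1_inv p hp1
  rcases lt_trichotomy r (1 / p) with hlt | heq | hgt
  · -- r < 1/p
    have hr0' : 0 < r := by
      rcases hr0.lt_or_eq with h | h
      · exact h
      · exfalso; rw [← h] at hcon; linarith
    -- MVT on [0, r]
    obtain ⟨α, hα, hαs⟩ := exists_hasDerivAt_eq_slope (Uf p) (Uf1 p) hr0'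
      hcF.continuousOn (fun x _ => hasDerivAt_Uf p hp1 x)
    rw [hF0, sub_zero, sub_zero] at hαs
    have hαneg : Uf1 p α < 0 := by rw [hαs]; exact div_neg_of_neg_of_pos hcon hr0'
    -- MVT on [r, 1/p]
    obtain ⟨β, hβ, hβs⟩ := exists_hasDerivAt_eq_slope (Uf p) (Uf1 p) hlt
      hcF.continuousOn (fun x _ => hasDerivAt_Uf p hp1 x)
    rw [hFi, zero_sub] at hβs
    have hβpos : 0 < Uf1 p β := by
      rw [hβs]; exact div_pos (by linarith) (by linarith [hβ.2])
    have hαβ : α < β := lt_trans hα.2 hβ.1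
    have hsub1 : Ioo α β ⊆ Ioo (0:ℝ) 1 := fun x hx =>
      ⟨lt_trans hα.1 hx.1, lt_trans (lt_trans hx.2 hβ.2) (lt_of_lt_of_le hip1 le_rfl)⟩
    obtain ⟨ξ₁, hξ₁, hξ₁s⟩ := exists_hasDerivAt_eq_slope (Uf1 p) (Uf2 p) hαβ
      hcF1.continuousOn (fun x hx => hasDerivAt_Uf1 p hp1 (hsub1 hx))
    have hξ₁pos : 0 < Uf2 p ξ₁ := by
      rw [hξ₁s]; exact div_pos (by linarith) (by linarith)
    have hsub2 : Ioo β (1/p) ⊆ Ioo (0:ℝ) 1 := fun x hx =>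
      ⟨lt_trans (lt_trans hr0' hβ.1) hx.1, lt_trans hx.2 hip1⟩
    obtain ⟨ξ₂, hξ₂, hξ₂s⟩ := exists_hasDerivAt_eq_slope (Uf1 p) (Uf2 p) hβ.2
      hcF1.continuousOn (fun x hx => hasDerivAt_Uf1 p hp1 (hsub2 hx))
    rw [hF1i, zero_sub] at hξ₂s
    have hξ₂neg : Uf2 p ξ₂ < 0 := by
      rw [hξ₂s]
      exact div_neg_of_neg_of_pos (by linarith) (by linarith [hξ₂.2, hξ₂.1])
    have := Uf2_mono p hp1 hp2 (hsub1 hξ₁) (hsub2 hξ₂)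
      (le_of_lt (lt_trans hξ₁.2 hξ₂.1))
    linarith
  · rw [← heq] at hFi; linarith
  · -- 1/p < r
    have hr1' : r ≤ 1 := hr1
    -- Rolle on [0, 1/p]
    obtain ⟨ρ, hρ, hρs⟩ := exists_hasDerivAt_eq_slope (Uf p) (Uf1 p) hip
      hcF.continuousOn (fun x _ => hasDerivAt_Uf p hp1 x)
    rw [hF0, hFi, sub_zero, sub_zero, zero_div] at hρs
    -- MVT on [1/p, r]
    obtain ⟨β, hβ, hβs⟩ := exists_hasDerivAt_eq_slope (Uf p) (Uf1 p) hgt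
      hcF.continuousOn (fun x _ => hasDerivAt_Uf p hp1 x)
    rw [hFi, sub_zero] at hβs
    have hβneg : Uf1 p β < 0 := by
      rw [hβs]; exact div_neg_of_neg_of_pos hcon (by linarith [hβ.1, hβ.2])
    have hρi : ρ < 1 / p := hρ.2
    have hsub1 : Ioo ρ (1/p) ⊆ Ioo (0:ℝ) 1 := fun x hx =>
      ⟨lt_trans hρ.1 hx.1, lt_trans hx.2 hip1⟩
    obtain ⟨ξ₁, hξ₁, hξ₁s⟩ := exists_hasDerivAt_eq_slope (Uf1 p) (Uf2 p) hρi
      hcF1.continuousOn (fun x hx => hasDerivAt_Uf1 p hp1 (hsub1 hx))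
    rw [hF1i, hρs, sub_zero, zero_div] at hξ₁s
    have hsub2 : Ioo (1/p) β ⊆ Ioo (0:ℝ) 1 := fun x hx =>
      ⟨lt_trans hip hx.1, lt_of_lt_of_le (lt_trans hx.2 hβ.2) hr1'⟩
    obtain ⟨ξ₂, hξ₂, hξ₂s⟩ := exists_hasDerivAt_eq_slope (Uf1 p) (Uf2 p) hβ.1
      hcF1.continuousOn (fun x hx => hasDerivAt_Uf1 p hp1 (hsub2 hx))
    rw [hF1i, sub_zero] at hξ₂s
    have hξ₂neg : Uf2 p ξ₂ < 0 := by
      rw [hξ₂s]; exact div_neg_of_neg_of_pos hβneg (by linarith [hξ₂.1, hξ₂.2, hβ.1])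
    have := Uf2_mono p hp1 hp2 (hsub1 hξ₁) (hsub2 hξ₂)
      (le_of_lt (lt_trans hξ₁.2 hξ₂.1))
    rw [hξ₁s] at this
    linarith

theorem stmt_8 {H : Type*} [NormedAddCommGroup H] [InnerProductSpace ℝ H]
    [SecondCountableTopology H]
    (p : ℝ) (hp1 : 1 < p) (hp2 : p < 2)
    (x y : H) (hxy : (x, y) ≠ (0, 0)) :
    p * (1 - 1 / p) ^ (p - 1) * ((p - 1) * ‖y‖ - ‖x‖) * (‖x‖ + ‖y‖) ^ (p - 1) ≥
      (p - 1) ^ p * ‖y‖ ^ p - ‖x‖ ^ p +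
        (1 - p * (1 - 1 / p) ^ (p - 1)) * ((p - 1) * ‖y‖ - ‖x‖) ^ 2 /
          (‖x‖ + ‖y‖) ^ (2 - p) := by
  have ha : 0 ≤ ‖x‖ := norm_nonneg x
  have hb : 0 ≤ ‖y‖ := norm_nonneg y
  have hs : 0 < ‖x‖ + ‖y‖ := by
    rcases lt_or_eq_of_le (by positivity : (0:ℝ) ≤ ‖x‖ + ‖y‖) with h | h
    · exact h
    · exfalso
      apply hxy
      have hx0 : ‖x‖ = 0 := by nlinarith
      have hy0 : ‖y‖ = 0 := by nlinarith
      simp [Prod.ext_iff, norm_eq_zero.mp hx0, norm_eq_zero.mp hy0]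
  have hkey := Uf_nonneg p hp1 hp2 (div_nonneg hb hs.le)
    ((div_le_one hs).mpr (le_add_of_nonneg_left ha))
  have hsp : 0 < (‖x‖ + ‖y‖) ^ p := Real.rpow_pos_of_pos hs p
  have h1 : (1 : ℝ) - ‖y‖ / (‖x‖ + ‖y‖) = ‖x‖ / (‖x‖ + ‖y‖) := by field_simp; ring
  have h2 : (‖y‖ / (‖x‖ + ‖y‖)) ^ p = ‖y‖ ^ p / (‖x‖ + ‖y‖) ^ p :=
    Real.div_rpow hb hs.le p
  have h3 : (‖x‖ / (‖x‖ + ‖y‖)) ^ p = ‖x‖ ^ p / (‖x‖ + ‖y‖) ^ p :=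
    Real.div_rpow ha hs.le p
  have h4 : (‖x‖ + ‖y‖) ^ (p - 1) = (‖x‖ + ‖y‖) ^ p / (‖x‖ + ‖y‖) := by
    rw [Real.rpow_sub hs, Real.rpow_one]
  have h5 : (‖x‖ + ‖y‖) ^ (2 - p) = (‖x‖ + ‖y‖) ^ (2:ℕ) / (‖x‖ + ‖y‖) ^ p := by
    rw [Real.rpow_sub hs, ← Real.rpow_natCast (‖x‖ + ‖y‖) 2]
    norm_num
  rw [ge_iff_le, ← sub_nonneg]
  have hEq : p * (1 - 1 / p) ^ (p - 1) * ((p - 1) * ‖y‖ - ‖x‖) * (‖x‖ + ‖y‖) ^ (p - 1) -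
      ((p - 1) ^ p * ‖y‖ ^ p - ‖x‖ ^ p +
        (1 - p * (1 - 1 / p) ^ (p - 1)) * ((p - 1) * ‖y‖ - ‖x‖) ^ 2 /
          (‖x‖ + ‖y‖) ^ (2 - p)) =
      (‖x‖ + ‖y‖) ^ p * Uf p (‖y‖ / (‖x‖ + ‖y‖)) := by
    unfold Uf Uc
    rw [h1, h2, h3, h4, h5]
    field_simp
    ring
  rw [hEq]
  exact mul_nonneg hsp.le hkey
end

section
/- Let H be a real (separable) Hilbert space, let 1 < p < 2, and define U_p : H × H → ℝ by U_p(x,y) = p(1−1/p)^{p−1}·((p−1)‖y‖ − ‖x‖)·(‖x‖+‖y‖)^{p−1}. Then for every fixed x ∈ H, the function y ↦ U_p(x,y) is convex on H. -/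
private lemma g_deriv1 (p a : ℝ) (hp1 : 1 < p) (ha : 0 ≤ a) {t : ℝ} (ht : 0 < t) :
    HasDerivAt (fun t : ℝ => ((p - 1) * t - a) * (a + t) ^ (p - 1))
      (p * (p - 1) * t * (a + t) ^ (p - 2)) t := by
  have hat : 0 < a + t := by linarith
  have h1 : HasDerivAt (fun t : ℝ => (p - 1) * t - a) (p - 1) t := by
    simpa using ((hasDerivAt_id t).const_mul (p - 1)).sub_const a
  have h2 : HasDerivAt (fun t : ℝ => (a + t) ^ (p - 1))
      ((p - 1) * (a + t) ^ (p - 1 - 1)) t := by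
    have := (Real.hasDerivAt_rpow_const (x := a + t) (p := p - 1)
      (Or.inl hat.ne')).comp t ((hasDerivAt_id t).const_add a)
    simpa [Function.comp_def] using this
  have h3 : (a + t) ^ (p - 1) = (a + t) * (a + t) ^ (p - 2) := by
    rw [show p - 1 = 1 + (p - 2) by ring, Real.rpow_add hat, Real.rpow_one]
  have := h1.mul h2
  exact this.congr_deriv (by
  rw [show p - 1 - 1 = p - 2 by ring, h3]
  ring)

private lemma g_deriv2 (p a : ℝ) (hp1 : 1 < p) (ha : 0 ≤ a) {t : ℝ} (ht : 0 < t) :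
    HasDerivAt (fun t : ℝ => p * (p - 1) * t * (a + t) ^ (p - 2))
      (p * (p - 1) * (a + (p - 1) * t) * (a + t) ^ (p - 3)) t := by
  have hat : 0 < a + t := by linarith
  have h2 : HasDerivAt (fun t : ℝ => (a + t) ^ (p - 2))
      ((p - 2) * (a + t) ^ (p - 2 - 1)) t := by
    have := (Real.hasDerivAt_rpow_const (x := a + t) (p := p - 2)
      (Or.inl hat.ne')).comp t ((hasDerivAt_id t).const_add a)
    simpa [Function.comp_def] using this
  have h1 : HasDerivAt (fun t : ℝ => p * (p - 1) * t) (p * (p - 1)) t := by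
    simpa using (hasDerivAt_id t).const_mul (p * (p - 1))
  have h3 : (a + t) ^ (p - 2) = (a + t) * (a + t) ^ (p - 3) := by
    rw [show p - 2 = 1 + (p - 3) by ring, Real.rpow_add hat, Real.rpow_one]
  have := h1.mul h2
  exact this.congr_deriv (by
  rw [show p - 2 - 1 = p - 3 by ring, h3]
  ring)

theorem stmt_9 {H : Type*} [NormedAddCommGroup H] [InnerProductSpace ℝ H]
    [SecondCountableTopology H]
    (p : ℝ) (hp1 : 1 < p) (hp2 : p < 2) (x : H) :
    ConvexOn ℝ Set.univ (fun y : H =>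
      p * (1 - 1 / p) ^ (p - 1) * ((p - 1) * ‖y‖ - ‖x‖) * (‖x‖ + ‖y‖) ^ (p - 1)) := by
  set a := ‖x‖ with ha_def
  have ha : 0 ≤ a := norm_nonneg x
  set g : ℝ → ℝ := fun t => ((p - 1) * t - a) * (a + t) ^ (p - 1) with hg_def
  -- continuity of g on Ici 0
  have hcont : ContinuousOn g (Set.Ici 0) := by
    apply ContinuousOn.mul
    · exact ((continuous_const.mul continuous_id).sub continuous_const).continuousOn
    · refine (continuous_iff_continuousAt.mpr fun t => ?_).continuousOn
      exact (Real.continuousAt_rpow_const _ _ (Or.inr (by linarith))).comp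
        (continuous_const.add continuous_id).continuousAt
  -- deriv of g equals the formula on Ioi 0
  have hderiv_eq : ∀ t : ℝ, 0 < t → deriv g t = p * (p - 1) * t * (a + t) ^ (p - 2) :=
    fun t ht => (g_deriv1 p a hp1 ha ht).deriv
  have hdiffOn : DifferentiableOn ℝ g (Set.Ioi 0) := fun t ht =>
    (g_deriv1 p a hp1 ha ht).differentiableAt.differentiableWithinAt
  have hevent : ∀ t : ℝ, 0 < t →
      deriv g =ᶠ[nhds t] fun s => p * (p - 1) * s * (a + s) ^ (p - 2) := by
    intro t ht
    filter_upwards [eventually_gt_nhds ht] with s hs using hderiv_eq s hs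
  -- convexity of g on Ici 0
  have hconv : ConvexOn ℝ (Set.Ici 0) g := by
    apply convexOn_of_deriv2_nonneg (convex_Ici 0) hcont
    · rw [interior_Ici]; exact hdiffOn
    · rw [interior_Ici]
      intro t ht
      have ht' : (0:ℝ) < t := ht
      exact ((g_deriv2 p a hp1 ha ht').differentiableAt.congr_of_eventuallyEq
        (hevent t ht')).differentiableWithinAt
    · rw [interior_Ici]
      intro t ht
      have ht' : (0:ℝ) < t := ht
      have hat : 0 < a + t := by linarith
      have : deriv (deriv g) t = p * (p - 1) * (a + (p - 1) * t) * (a + t) ^ (p - 3) := by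
        rw [(hevent t ht').deriv_eq]
        exact (g_deriv2 p a hp1 ha ht').deriv
      simp only [Function.iterate_succ, Function.iterate_zero, Function.comp_apply, Function.id_def]
      rw [this]
      have h1 : 0 < p * (p - 1) := by nlinarith
      have h2 : 0 ≤ a + (p - 1) * t := by nlinarith
      have h3 : 0 ≤ (a + t) ^ (p - 3) := Real.rpow_nonneg hat.le _
      positivity
  -- monotonicity of g on Ici 0
  have hmono : MonotoneOn g (Set.Ici 0) := by
    apply monotoneOn_of_deriv_nonneg (convex_Ici 0) hcont
    · rw [interior_Ici]; exact hdiffOn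
    · rw [interior_Ici]
      intro t ht
      have ht' : (0:ℝ) < t := ht
      rw [hderiv_eq t ht']
      have hat : 0 < a + t := by linarith
      have h1 : 0 < p * (p - 1) := by nlinarith
      have h3 : 0 ≤ (a + t) ^ (p - 2) := Real.rpow_nonneg hat.le _
      positivity
  -- the composed function y ↦ g ‖y‖ is convex on univ
  have hcomp : ConvexOn ℝ (Set.univ : Set H) (fun y => g ‖y‖) := by
    refine ⟨convex_univ, fun y₁ _ y₂ _ s t hs ht hst => ?_⟩
    have hn1 : ‖s • y₁ + t • y₂‖ ≤ s * ‖y₁‖ + t * ‖y₂‖ := by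
      calc ‖s • y₁ + t • y₂‖ ≤ ‖s • y₁‖ + ‖t • y₂‖ := norm_add_le _ _
        _ = s * ‖y₁‖ + t * ‖y₂‖ := by
            rw [norm_smul, norm_smul, Real.norm_of_nonneg hs, Real.norm_of_nonneg ht]
    have hmem : s * ‖y₁‖ + t * ‖y₂‖ ∈ Set.Ici (0:ℝ) := by
      have h1 := norm_nonneg y₁; have h2 := norm_nonneg y₂
      exact Set.mem_Ici.mpr (by positivity)
    calc g ‖s • y₁ + t • y₂‖ ≤ g (s * ‖y₁‖ + t * ‖y₂‖) :=
          hmono (Set.mem_Ici.mpr (norm_nonneg _)) hmem hn1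
      _ ≤ s * g ‖y₁‖ + t * g ‖y₂‖ :=
          hconv.2 (Set.mem_Ici.mpr (norm_nonneg y₁)) (Set.mem_Ici.mpr (norm_nonneg y₂)) hs ht hst
  -- multiply by the nonnegative constant
  have hc : 0 ≤ p * (1 - 1 / p) ^ (p - 1) := by
    have h1 : (0:ℝ) ≤ 1 - 1 / p := by
      have : 1 / p < 1 := by rw [div_lt_one (by linarith)]; linarith
      linarith
    have := Real.rpow_nonneg h1 (p - 1)
    nlinarith
  have := hcomp.smul hc
  refine this.congr (fun y _ => ?_)
  simp [hg_def, smul_eq_mul]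
  ring
end

section
/- For every real p ≥ 2 the following five inequalities hold: (1) (1 − 1/p)^{p−1} ≥ 2/(p+2); (2) p·(1 − 1/p)^{p−1} ≥ 1 + ((p−2)/(p−1))·(1/2 − 1/e); (3) (1 − 1/p)^{p−1} ≤ 1/2; (4) (1 − 1/(p−1))^{p−1} ≤ 1/e; (5) 1 − (1 − 1/p)^{p−2} ≥ (p−2)/(2(p−1)). -/
open Real

-- log(1+x) ≤ x(2+x)/(2(1+x)) for x ≥ 0
lemma aux_log_bound (x : ℝ) (hx : 0 ≤ x) :
    Real.log (1 + x) ≤ x * (2 + x) / (2 * (1 + x)) := by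
  have h1 : (0:ℝ) < 1 + x := by linarith
  have h2 : Real.log (1 + x) ≤ Real.sinh (Real.log (1 + x)) :=
    Real.self_le_sinh_iff.mpr (Real.log_nonneg (by linarith))
  rw [Real.sinh_log h1] at h2
  have : ((1 + x) - (1 + x)⁻¹) / 2 = x * (2 + x) / (2 * (1 + x)) := by
    field_simp; ring
  linarith [this ▸ h2]

-- F t = t * (log (t+1) - log t), monotone on [1,∞), F 1 = log 2
noncomputable def Faux : ℝ → ℝ := fun t => t * (Real.log (t + 1) - Real.log t)

lemma Faux_hasDeriv (t : ℝ) (ht : 0 < t) :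
    HasDerivAt Faux (Real.log (t + 1) - Real.log t - 1 / (t + 1)) t := by
  have h1 : HasDerivAt (fun t : ℝ => Real.log (t + 1)) (1 / (t + 1)) t := by
    have := (Real.hasDerivAt_log (by linarith : t + 1 ≠ 0)).comp t
      ((hasDerivAt_id t).add_const 1)
    simpa [one_div, Function.comp_def] using this
  have h2 : HasDerivAt (fun t : ℝ => Real.log t) (1 / t) t := by
    simpa [one_div] using Real.hasDerivAt_log ht.ne'
  have := ((hasDerivAt_id t).mul (h1.sub h2))
  replace this : HasDerivAt Faux
      (1 * (Real.log (t + 1) - Real.log t) + t * (1 / (t + 1) - 1 / t)) t := this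
  convert this using 1
  have ht' : t ≠ 0 := ht.ne'
  have ht1' : t + 1 ≠ 0 := by linarith
  field_simp
  ring

lemma Faux_mono : MonotoneOn Faux (Set.Ici (1:ℝ)) := by
  have hderiv : ∀ t ∈ interior (Set.Ici (1:ℝ)), 0 < deriv Faux t := by
    intro t ht
    rw [interior_Ici] at ht
    have ht1 : (1:ℝ) < t := ht
    have ht0 : (0:ℝ) < t := by linarith
    rw [(Faux_hasDeriv t ht0).deriv]
    have hlog : Real.log t < Real.log (t + 1) - 1 / (t + 1) := by
      have h := Real.log_lt_sub_one_of_pos (x := t / (t + 1)) (by positivity)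
        (ne_of_lt (by rw [div_lt_one (by linarith)]; linarith))
      rw [Real.log_div ht0.ne' (by linarith)] at h
      have : t / (t + 1) - 1 = -(1 / (t + 1)) := by field_simp; ring
      linarith [this ▸ h]
    linarith
  exact (strictMonoOn_of_deriv_pos (convex_Ici 1)
    (fun t ht => ((Faux_hasDeriv t (by simp at ht; linarith)).differentiableAt.continuousAt).continuousWithinAt)
    hderiv).monotoneOn

-- H p = (p-1)(log(p-1) - log p) + log(p+2), monotone on [2,∞), H 2 = log 2
noncomputable def Haux : ℝ → ℝ :=
  fun p => (p - 1) * (Real.log (p - 1) - Real.log p) + Real.log (p + 2)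

lemma Haux_hasDeriv (p : ℝ) (hp : 1 < p) :
    HasDerivAt Haux
      (Real.log (p - 1) - Real.log p + 1 / p + 1 / (p + 2)) p := by
  have h1 : HasDerivAt (fun p : ℝ => Real.log (p - 1)) (1 / (p - 1)) p := by
    have := (Real.hasDerivAt_log (by intro h; linarith [sub_eq_zero.mp h] : p - 1 ≠ 0)).comp p
      ((hasDerivAt_id p).sub_const 1)
    simpa [one_div, Function.comp_def] using this
  have h2 : HasDerivAt (fun p : ℝ => Real.log p) (1 / p) p := by
    simpa [one_div] using Real.hasDerivAt_log (by linarith)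
  have h3 : HasDerivAt (fun p : ℝ => Real.log (p + 2)) (1 / (p + 2)) p := by
    have := (Real.hasDerivAt_log (by linarith : p + 2 ≠ 0)).comp p
      ((hasDerivAt_id p).add_const 2)
    simpa [one_div, Function.comp_def] using this
  have := (((hasDerivAt_id p).sub_const 1).mul (h1.sub h2)).add h3
  replace this : HasDerivAt Haux
      (1 * (Real.log (p - 1) - Real.log p) + (p - 1) * (1 / (p - 1) - 1 / p) + 1 / (p + 2)) p := this
  convert this using 1
  have hp1 : p - 1 ≠ 0 := by intro h; linarith [sub_eq_zero.mp h]
  have hp0' : p ≠ 0 := by linarith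
  have hp2' : p + 2 ≠ 0 := by linarith
  field_simp
  ring

lemma Haux_mono : MonotoneOn Haux (Set.Ici (2:ℝ)) := by
  have hderiv : ∀ p ∈ interior (Set.Ici (2:ℝ)), 0 < deriv Haux p := by
    intro p hpi
    rw [interior_Ici] at hpi
    have hp2 : (2:ℝ) < p := hpi
    have hp0 : (0:ℝ) < p := by linarith
    have hp1 : (0:ℝ) < p - 1 := by linarith
    rw [(Haux_hasDeriv p (by linarith)).deriv]
    -- need: log p - log (p-1) < 1/p + 1/(p+2)
    have hb := aux_log_bound (1 / (p - 1)) (by positivity)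
    have he : (1:ℝ) + 1 / (p - 1) = p / (p - 1) := by field_simp; ring
    rw [he, Real.log_div hp0.ne' hp1.ne'] at hb
    have hA : (1 / (p - 1)) * (2 + 1 / (p - 1)) / (2 * (p / (p - 1)))
        = (2*p-1)/(2*p*(p-1)) := by
      field_simp; ring
    rw [hA] at hb
    have he2 : 1/p + 1/(p+2) - (2*p-1)/(2*p*(p-1))
        = (2*p^2-3*p-2)/(2*p*(p-1)*(p+2)) := by
      field_simp; ring
    have hpos : 0 < 1/p + 1/(p+2) - (2*p-1)/(2*p*(p-1)) := by
      rw [he2]; apply div_pos (by nlinarith) (by positivity)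
    linarith
  exact (strictMonoOn_of_deriv_pos (convex_Ici 2)
    (fun p hpi => ((Haux_hasDeriv p (by simp at hpi; linarith)).differentiableAt.continuousAt).continuousWithinAt)
    hderiv).monotoneOn

theorem stmt_10 (p : ℝ) (hp : 2 ≤ p) :
    (1 - 1 / p) ^ (p - 1) ≥ 2 / (p + 2) ∧
    p * (1 - 1 / p) ^ (p - 1) ≥ 1 + (p - 2) / (p - 1) * (1 / 2 - 1 / Real.exp 1) ∧
    (1 - 1 / p) ^ (p - 1) ≤ 1 / 2 ∧
    (1 - 1 / (p - 1)) ^ (p - 1) ≤ 1 / Real.exp 1 ∧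
    1 - (1 - 1 / p) ^ (p - 2) ≥ (p - 2) / (2 * (p - 1)) := by
  have hp0 : (0:ℝ) < p := by linarith
  have hp1 : (0:ℝ) < p - 1 := by linarith
  have hb0 : (0:ℝ) < 1 - 1 / p := by
    rw [sub_pos, div_lt_one hp0]; linarith
  have hbase : (1:ℝ) - 1 / p = (p - 1) / p := by field_simp
  have hlogb : Real.log (1 - 1 / p) = Real.log (p - 1) - Real.log p := by
    rw [hbase, Real.log_div hp1.ne' hp0.ne']
  have hrpow : (1 - 1 / p) ^ (p - 1) = Real.exp ((p - 1) * (Real.log (p-1) - Real.log p)) := by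
    rw [Real.rpow_def_of_pos hb0, hlogb, mul_comm]
  -- (3)
  have h3 : (1 - 1 / p) ^ (p - 1) ≤ 1 / 2 := by
    have hF := Faux_mono (Set.self_mem_Ici) (Set.mem_Ici.mpr (by linarith : (1:ℝ) ≤ p - 1)) (by linarith)
    have hF1 : Faux 1 = Real.log 2 := by simp [Faux]; norm_num
    have hFp : Faux (p - 1) = (p - 1) * (Real.log p - Real.log (p - 1)) := by
      simp [Faux]
    rw [hF1, hFp] at hF
    rw [hrpow]
    calc Real.exp ((p - 1) * (Real.log (p-1) - Real.log p))
        ≤ Real.exp (- Real.log 2) := by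
          apply Real.exp_le_exp.mpr; nlinarith
      _ = 1 / 2 := by rw [Real.exp_neg, Real.exp_log]; norm_num; norm_num
  -- (1)
  have h1 : (1 - 1 / p) ^ (p - 1) ≥ 2 / (p + 2) := by
    have hH := Haux_mono (Set.self_mem_Ici) (Set.mem_Ici.mpr hp) hp
    have hH2 : Haux 2 = Real.log 2 := by
      unfold Haux
      rw [show (2:ℝ) + 2 = 2 ^ 2 by norm_num, Real.log_pow]
      norm_num
      ring
    rw [hH2] at hH
    have : Real.log (2 / (p + 2)) ≤ (p - 1) * (Real.log (p-1) - Real.log p) := by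
      rw [Real.log_div (by norm_num) (by linarith)]
      simp only [Haux] at hH
      linarith
    rw [ge_iff_le, hrpow]
    calc 2 / (p + 2) = Real.exp (Real.log (2 / (p + 2))) := by
          rw [Real.exp_log (by positivity)]
      _ ≤ _ := Real.exp_le_exp.mpr this
  -- (5)
  have h5 : 1 - (1 - 1 / p) ^ (p - 2) ≥ (p - 2) / (2 * (p - 1)) := by
    have hsplit : (1 - 1 / p) ^ (p - 2) = (1 - 1 / p) ^ (p - 1) * (1 - 1/p)⁻¹ := by
      rw [← Real.rpow_neg_one (1 - 1/p), ← Real.rpow_add hb0]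
      ring_nf
    have hinv : (1 - 1/p)⁻¹ = p / (p - 1) := by
      rw [hbase]; rw [inv_div]
    rw [hsplit, hinv]
    have hle : (1 - 1 / p) ^ (p - 1) * (p / (p - 1)) ≤ (1/2) * (p / (p-1)) := by
      apply mul_le_mul_of_nonneg_right h3 (by positivity)
    have : (1:ℝ) - 1/2 * (p / (p-1)) = (p - 2) / (2 * (p - 1)) := by
      field_simp; ring
    linarith
  -- (4)
  have h4 : (1 - 1 / (p - 1)) ^ (p - 1) ≤ 1 / Real.exp 1 := by
    have hb : (0:ℝ) ≤ 1 - 1 / (p - 1) := by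
      rw [sub_nonneg, div_le_one hp1]; linarith
    have hle : 1 - 1 / (p - 1) ≤ Real.exp (-(1 / (p - 1))) := by
      have := Real.add_one_le_exp (-(1 / (p - 1)))
      linarith
    calc (1 - 1 / (p - 1)) ^ (p - 1)
        ≤ (Real.exp (-(1 / (p - 1)))) ^ (p - 1) :=
          Real.rpow_le_rpow hb hle (by linarith)
      _ = Real.exp (-(1 / (p - 1)) * (p - 1)) := by
          rw [← Real.exp_one_rpow (-(1 / (p-1)) * (p-1)), Real.rpow_mul (Real.exp_pos 1).le,
            Real.exp_one_rpow]
      _ = Real.exp (-1) := by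
          congr 1; field_simp
      _ = 1 / Real.exp 1 := by rw [Real.exp_neg]; rw [one_div]
  -- (2)
  have h2 : p * (1 - 1 / p) ^ (p - 1) ≥ 1 + (p - 2) / (p - 1) * (1 / 2 - 1 / Real.exp 1) := by
    have hpg : p * (1 - 1 / p) ^ (p - 1) ≥ p * (2 / (p + 2)) :=
      mul_le_mul_of_nonneg_left h1 hp0.le
    have he1 : (2.7182818283:ℝ) < Real.exp 1 := by
      have := Real.exp_one_gt_d9; linarith
    have he2 : Real.exp 1 < 3 := by
      have := Real.exp_one_lt_d9; linarith
    have hc1 : (0:ℝ) ≤ 1 / 2 - 1 / Real.exp 1 := by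
      rw [sub_nonneg, div_le_div_iff₀ (Real.exp_pos 1) (by norm_num)]; linarith
    have hc2 : 1 / 2 - 1 / Real.exp 1 ≤ 1 / 6 := by
      have : (1:ℝ)/3 ≤ 1 / Real.exp 1 := by
        rw [div_le_div_iff₀ (by norm_num) (Real.exp_pos 1)]; linarith
      linarith
    have hstep : 1 + (p - 2) / (p - 1) * (1 / 2 - 1 / Real.exp 1) ≤ p * (2 / (p + 2)) := by
      have hq : (p - 2) / (p - 1) * (1 / 2 - 1 / Real.exp 1) ≤ (p - 2) / (p + 2) := by
        calc (p - 2) / (p - 1) * (1 / 2 - 1 / Real.exp 1)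
            ≤ (p - 2) / (p - 1) * (1/6) := by
              exact mul_le_mul_of_nonneg_left hc2 (div_nonneg (by linarith) (by linarith))
          _ ≤ (p - 2) / (p + 2) := by
              rw [div_mul_eq_mul_div, div_le_div_iff₀ (by positivity) (by positivity)]
              nlinarith
      have : 1 + (p - 2) / (p + 2) = p * (2 / (p + 2)) := by
        field_simp; ring
      linarith
    linarith
  exact ⟨h1, h2, h3, h4, h5⟩
end

section
/- Let H be a real (separable) Hilbert space, let 2 < p < ∞, and define U_p : H × H → ℝ by U_p(x,y) = p(1−1/p)^{p−1}·(‖y‖ − (p−1)‖x‖)·(‖x‖+‖y‖)^{p−1} if ‖y‖ ≥ (p−2)‖x‖, and U_p(x,y) = −((p−1)^{2p−2}/p^{p−2})·‖x‖^p if ‖y‖ < (p−2)‖x‖. Set α_p = ((p−2)/(p−1))·(1/2 − 1/e). Then for all x, y ∈ H, U_p(x,y) ≥ ‖y‖^p − (p−1)^p ‖x‖^p + α_p · | ‖y‖ − (p−1)‖x‖ |^p. -/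
open Real

private lemma s11_deriv (e c0 c1 : ℝ) (he : 1 ≤ e) (s : ℝ) :
    HasDerivAt (fun t => (c0 + c1*t) ^ e) (e * (c0 + c1*s)^(e-1) * c1) s := by
  have h2 : HasDerivAt (fun t : ℝ => c0 + c1*t) c1 s := by
    simpa using ((hasDerivAt_id s).const_mul c1).const_add c0
  exact (Real.hasDerivAt_rpow_const (x := c0 + c1*s) (p := e) (Or.inr he)).comp s h2

private lemma s11_d1 (e : ℝ) (he : 1 ≤ e) (s : ℝ) :
    HasDerivAt (fun t : ℝ => (1+t)^e) (e * (1+s)^(e-1)) s := by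
  have h := s11_deriv e 1 1 he s
  simpa using h

private lemma s11_d2 (e a : ℝ) (he : 1 ≤ e) (s : ℝ) :
    HasDerivAt (fun t : ℝ => (a-t)^e) (-(e * (a-s)^(e-1))) s := by
  have h := s11_deriv e a (-1) he s
  simp only [neg_one_mul, ← sub_eq_add_neg, mul_neg_one] at h
  simpa using h

set_option maxHeartbeats 2000000 in
private lemma s11_Aminus {p c α : ℝ} (hp : 2 < p) (hc : c = 1/2 - 1/Real.exp 1)
    (hα : α = (p-2)/(p-1) * c) {u : ℝ} (hu0 : 0 ≤ u) (hu1 : u * (p-1) ≤ 1) :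
    0 ≤ (p-1)^p * (1+u)^p - ((p-1)-u)^p - p^2*(p-1)^(p-1)*u - α*p^p*u^p := by
  have hq0 : (0:ℝ) < p - 1 := by linarith
  have hq1 : (1:ℝ) < p - 1 := by linarith
  have hp0 : (0:ℝ) < p := by linarith
  have hp1 : (1:ℝ) ≤ p := by linarith
  have hp1' : (1:ℝ) ≤ p - 1 := by linarith
  have hcl : (0.1321:ℝ) ≤ c := by
    have : 1/Real.exp 1 ≤ 1/2.7182818283 :=
      one_div_le_one_div_of_le (by norm_num) Real.exp_one_gt_d9.le
    rw [hc]; linarith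
  have hc0 : 0 ≤ c := by linarith
  have hα0 : 0 ≤ α := by
    rw [hα]; exact mul_nonneg (div_nonneg (by linarith) (by linarith)) hc0
  have huq : u ≤ 1/(p-1) := by rw [le_div_iff₀ hq0]; linarith
  have huq' : u ≤ p - 1 := le_trans huq (by rw [div_le_iff₀ hq0]; nlinarith)
  -- Step S1 : c * p^(p-1) ≤ (p-1)^(2*p-3)
  have hS1 : c * p^(p-1) ≤ (p-1)^(2*p-3) := by
    have h1 : p/(p-1) ≤ Real.exp (1/(p-1)) := by
      have := Real.add_one_le_exp (1/(p-1))
      have heq : p/(p-1) = 1/(p-1) + 1 := by field_simp; ring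
      linarith [heq.le, heq.ge]
    have h2 : (p/(p-1))^(p-1) ≤ Real.exp 1 := by
      calc (p/(p-1))^(p-1) ≤ (Real.exp (1/(p-1)))^(p-1) :=
            Real.rpow_le_rpow (by positivity) h1 (by linarith)
      _ = Real.exp (1/(p-1) * (p-1)) := (Real.exp_mul _ _).symm
      _ = Real.exp 1 := by rw [one_div, inv_mul_cancel₀ hq0.ne']
    have h3 : p^(p-1) = (p/(p-1))^(p-1) * (p-1)^(p-1) := by
      rw [← Real.mul_rpow (by positivity) (by positivity)]
      congr 1; field_simp
    have h4 : c * Real.exp 1 ≤ 1 := by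
      have he1 : c * Real.exp 1 = Real.exp 1/2 - 1 := by
        rw [hc]; field_simp [Real.exp_ne_zero]
      have := Real.exp_one_lt_d9; rw [he1]; linarith
    have h5 : (p-1)^(p-1) ≤ (p-1)^(2*p-3) :=
      Real.rpow_le_rpow_of_exponent_le hp1' (by linarith)
    have hqq : (0:ℝ) ≤ (p-1)^(p-1) := by positivity
    calc c * p^(p-1) = c * ((p/(p-1))^(p-1) * (p-1)^(p-1)) := by rw [← h3]
    _ ≤ c * (Real.exp 1 * (p-1)^(p-1)) := by
        apply mul_le_mul_of_nonneg_left _ hc0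
        exact mul_le_mul_of_nonneg_right h2 hqq
    _ = (c * Real.exp 1) * (p-1)^(p-1) := by ring
    _ ≤ 1 * (p-1)^(p-1) := mul_le_mul_of_nonneg_right h4 hqq
    _ = (p-1)^(p-1) := one_mul _
    _ ≤ (p-1)^(2*p-3) := h5
  -- bound αp^p (1/q)^(p-2) ≤ q^(p-2) (q²-1)
  have hKey : α * p^p * (1/(p-1))^(p-2) ≤ (p-1)^(p-2) * ((p-1)^2 - 1) := by
    have e1 : ((1:ℝ)/(p-1))^(p-2) = 1/(p-1)^(p-2) := by
      rw [Real.div_rpow (by norm_num) hq0.le, Real.one_rpow]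
    have e2 : p^p = p^(p-1) * p := by
      rw [← Real.rpow_add_one hp0.ne' (p-1)]; ring_nf
    have e3 : (p-1)^(2*p-3) * (p-1) = (p-1)^(2*p-2) := by
      rw [← Real.rpow_add_one hq0.ne' (2*p-3)]; ring_nf
    have e4 : (p-1)^(2*p-2) = (p-1)^(p-2) * (p-1)^(p-2) * (p-1)^2 := by
      rw [← Real.rpow_two, ← Real.rpow_add hq0, ← Real.rpow_add hq0]; ring_nf
    have hαe : α * (p-1) = c * (p-2) := by rw [hα]; field_simp
    have hq2 : (0:ℝ) < (p-1)^(p-2) := by positivity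
    -- α p^p / q^(p-2) ≤ q^(p-2) (q²-1) :  reduce to S1
    rw [e1]
    rw [mul_one_div, div_le_iff₀ hq2]
    -- goal : α * p^p ≤ (p-1)^(p-2) * ((p-1)^2-1) * (p-1)^(p-2)
    have hq21 : ((p-1):ℝ)^2 - 1 = p * (p-2) := by ring
    have hS1' := mul_le_mul_of_nonneg_right hS1
      (show (0:ℝ) ≤ p * (p-2) / (p-1) from
        div_nonneg (mul_nonneg hp0.le (by linarith)) hq0.le)
    -- LHS : c * p^(p-1) * (p (p-2) / (p-1)) = α * p^p  (using hαe, e2)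
    have hL : c * p^(p-1) * (p * (p-2)/(p-1)) = α * p^p := by
      have hx : p * (p-2) / (p-1) * c = α * p := by rw [hα]; ring
      rw [e2]; linear_combination p^(p-1) * hx
    have hR : (p-1)^(2*p-3) * (p * (p-2)/(p-1)) = (p-1)^(p-2) * ((p-1)^2 - 1) * (p-1)^(p-2) := by
      rw [hq21]
      rw [show (p-1:ℝ)^(2*p-3) = (p-1)^(2*p-2) / (p-1) by
        rw [← Real.rpow_sub_one hq0.ne']; ring_nf]
      rw [e4]; field_simp
    rw [hL, hR] at hS1'
    exact hS1'
  -- the function Ψ and its derivatives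
  set Q : ℝ := 1/(p-1) with hQ
  have hQ0 : 0 ≤ Q := by positivity
  have hQq : Q ≤ p - 1 := by
    rw [hQ, div_le_iff₀ hq0]; nlinarith
  have hΨd : ∀ t : ℝ, HasDerivAt
      (fun t : ℝ => (p-1)^p*(1+t)^p - ((p-1)-t)^p - p^2*(p-1)^(p-1)*t - α*p^p*t^p)
      ((p-1)^p*(p*(1+t)^(p-1)) + p*((p-1)-t)^(p-1) - p^2*(p-1)^(p-1) - α*p^p*(p*t^(p-1))) t := by
    intro t
    have hlin : HasDerivAt (fun t : ℝ => p^2*(p-1)^(p-1)*t) (p^2*(p-1)^(p-1)) t := by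
      simpa using (hasDerivAt_id t).const_mul (p^2*(p-1)^(p-1))
    have hlast : HasDerivAt (fun t : ℝ => α*p^p*t^p) (α*p^p*(p*t^(p-1))) t := by
      simpa [mul_assoc] using
        (Real.hasDerivAt_rpow_const (x := t) (p := p) (Or.inr hp1)).const_mul (α*p^p)
    have h := ((((s11_d1 p hp1 t).const_mul ((p-1)^p)).sub (s11_d2 p (p-1) hp1 t)).sub
      hlin).sub hlast
    exact h.congr_deriv (by ring)
  have hΨ'd : ∀ t : ℝ, HasDerivAt
      (fun t : ℝ => (p-1)^p*(p*(1+t)^(p-1)) + p*((p-1)-t)^(p-1) - p^2*(p-1)^(p-1) - α*p^p*(p*t^(p-1)))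
      (p*(p-1)*((p-1)^p*(1+t)^(p-2) - ((p-1)-t)^(p-2) - α*p^p*t^(p-2))) t := by
    intro t
    have hq1' : (1:ℝ) ≤ p - 1 := hp1'
    have h1 := ((s11_d1 (p-1) hq1' t).const_mul p).const_mul ((p-1)^p)
    have h2 := (s11_d2 (p-1) (p-1) hq1' t).const_mul p
    have hlin : HasDerivAt (fun _ : ℝ => p^2*(p-1)^(p-1)) 0 t := hasDerivAt_const t _
    have h4 := ((Real.hasDerivAt_rpow_const (x := t) (p := p-1)
      (Or.inr hq1')).const_mul p).const_mul (α*p^p)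
    have h := (((h1.add h2).sub hlin).sub h4)
    have he : p - 1 - 1 = p - 2 := by ring
    rw [he] at h
    exact h.congr_deriv (by ring)
  -- Ψ'' ≥ 0 on the interior
  have hΨ''nonneg : ∀ x ∈ Set.Ioo (0:ℝ) Q,
      0 ≤ p*(p-1)*((p-1)^p*(1+x)^(p-2) - ((p-1)-x)^(p-2) - α*p^p*x^(p-2)) := by
    intro x hx
    obtain ⟨hx0, hxQ⟩ := hx
    have hp2 : (0:ℝ) ≤ p - 2 := by linarith
    have hxq : x ≤ p - 1 := le_trans hxQ.le hQq
    have n1 : ((p-1)-x)^(p-2) ≤ (p-1)^(p-2) :=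
      Real.rpow_le_rpow (by linarith) (by linarith) hp2
    have n2 : (1:ℝ) ≤ (1+x)^(p-2) := Real.one_le_rpow (by linarith) hp2
    have n3 : x^(p-2) ≤ Q^(p-2) := Real.rpow_le_rpow hx0.le hxQ.le hp2
    have hαp : (0:ℝ) ≤ α * p^p := mul_nonneg hα0 (by positivity)
    have n4 : α*p^p*x^(p-2) ≤ (p-1)^(p-2)*((p-1)^2-1) := by
      calc α*p^p*x^(p-2) ≤ α*p^p*Q^(p-2) := mul_le_mul_of_nonneg_left n3 hαp
      _ ≤ (p-1)^(p-2)*((p-1)^2-1) := by rw [hQ]; exact hKey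
    have n5 : (p-1)^p = (p-1)^(p-2)*(p-1)^2 := by
      rw [← Real.rpow_two, ← Real.rpow_add hq0]; ring_nf
    have n6 : (p-1)^p ≤ (p-1)^p*(1+x)^(p-2) :=
      le_mul_of_one_le_right (by positivity) n2
    apply mul_nonneg (by positivity)
    nlinarith [n1, n4, n6, n5]
  -- Ψ'(0) = 0
  have hΨ'0 : (p-1)^p*(p*(1+(0:ℝ))^(p-1)) + p*((p-1)-0)^(p-1) - p^2*(p-1)^(p-1)
      - α*p^p*(p*(0:ℝ)^(p-1)) = 0 := by
    rw [show (1:ℝ)+0 = 1 by norm_num, Real.one_rpow, sub_zero,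
      Real.zero_rpow (by linarith : p-1 ≠ 0)]
    have e2q : (p-1)^p = (p-1)^(p-1)*(p-1) := by
      rw [← Real.rpow_add_one hq0.ne']; ring_nf
    rw [e2q]; ring
  -- Ψ' ≥ 0 on Icc 0 Q
  have hmono1 : MonotoneOn
      (fun t : ℝ => (p-1)^p*(p*(1+t)^(p-1)) + p*((p-1)-t)^(p-1) - p^2*(p-1)^(p-1) - α*p^p*(p*t^(p-1)))
      (Set.Icc 0 Q) := by
    apply monotoneOn_of_hasDerivWithinAt_nonneg (convex_Icc _ _)
      (fun x _ => (hΨ'd x).differentiableAt.continuousAt.continuousWithinAt)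
      (fun x hx => ((hΨ'd x).hasDerivWithinAt))
    intro x hx
    rw [interior_Icc] at hx
    exact hΨ''nonneg x hx
  have hΨ'nonneg : ∀ t ∈ Set.Icc (0:ℝ) Q,
      0 ≤ (p-1)^p*(p*(1+t)^(p-1)) + p*((p-1)-t)^(p-1) - p^2*(p-1)^(p-1) - α*p^p*(p*t^(p-1)) := by
    intro t ht
    have h0 : (0:ℝ) ∈ Set.Icc (0:ℝ) Q := Set.left_mem_Icc.2 hQ0
    have := hmono1 h0 ht ht.1
    simp only at this
    linarith [hΨ'0]
  -- Ψ monotone on Icc 0 Q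
  have hmono2 : MonotoneOn
      (fun t : ℝ => (p-1)^p*(1+t)^p - ((p-1)-t)^p - p^2*(p-1)^(p-1)*t - α*p^p*t^p)
      (Set.Icc 0 Q) := by
    apply monotoneOn_of_hasDerivWithinAt_nonneg (convex_Icc _ _)
      (fun x _ => (hΨd x).differentiableAt.continuousAt.continuousWithinAt)
      (fun x hx => ((hΨd x).hasDerivWithinAt))
    intro x hx
    rw [interior_Icc] at hx
    exact hΨ'nonneg x (Set.Ioo_subset_Icc_self hx)
  -- Ψ(0) = 0 and conclude
  have hΨ0 : (p-1)^p*(1+(0:ℝ))^p - ((p-1)-0)^p - p^2*(p-1)^(p-1)*(0:ℝ) - α*p^p*(0:ℝ)^p = 0 := by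
    rw [show (1:ℝ)+0 = 1 by norm_num, Real.one_rpow, sub_zero,
      Real.zero_rpow (by linarith : p ≠ 0)]
    ring
  have hu' : u ∈ Set.Icc (0:ℝ) Q := ⟨hu0, huq⟩
  have h0' : (0:ℝ) ∈ Set.Icc (0:ℝ) Q := Set.left_mem_Icc.2 hQ0
  have hfin := hmono2 h0' hu' hu0
  simp only at hfin
  nlinarith [hfin, hΨ0]

set_option maxHeartbeats 2000000 in
private lemma s11_E {p : ℝ} (hp : 2 < p) :
    (1 + (p-2)/(p-1) * (1/2 - 1/Real.exp 1)) * p ^ (p-2) ≤ (p-1) ^ (p-1) := by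
  have hcl : (0.1321:ℝ) ≤ 1/2 - 1/Real.exp 1 := by
    have : 1/Real.exp 1 ≤ 1/2.7182818283 :=
      one_div_le_one_div_of_le (by norm_num) Real.exp_one_gt_d9.le
    linarith
  have hcu : (1:ℝ)/2 - 1/Real.exp 1 ≤ 0.1322 := by
    have : 1/2.7182818286 ≤ 1/Real.exp 1 :=
      one_div_le_one_div_of_le (Real.exp_pos 1) Real.exp_one_lt_d9.le
    linarith
  set c : ℝ := 1/2 - 1/Real.exp 1 with hc
  clear_value c
  clear hc
  have hq1 : (1:ℝ) < p - 1 := by linarith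
  have hq0 : (0:ℝ) < p - 1 := by linarith
  have hp0 : (0:ℝ) < p := by linarith
  set α : ℝ := (p-2)/(p-1) * c with hα
  have hα0 : 0 ≤ α := by
    rw [hα]; exact mul_nonneg (div_nonneg (by linarith) (by linarith)) (by linarith)
  have hαq : α * (p-1) = (p-2) * c := by rw [hα]; field_simp
  clear_value α
  clear hα
  have hL : (0:ℝ) < (1 + α) * p ^ (p-2) := by positivity
  have hR : (0:ℝ) < (p-1) ^ (p-1) := by positivity
  rw [← Real.log_le_log_iff hL hR]
  rw [Real.log_mul (by positivity) (by positivity), Real.log_rpow hp0,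
    Real.log_rpow hq0]
  have hlog1 : Real.log (1 + α) ≤ α := by
    have := Real.log_le_sub_one_of_pos (show (0:ℝ) < 1 + α by linarith)
    linarith
  set X : ℝ := Real.log (p-1) with hX
  set Y : ℝ := Real.log p with hY
  set L2 : ℝ := Real.log 2 with hL2
  have hL2u : L2 ≤ 0.6931471808 := Real.log_two_lt_d9.le
  have hL2l : (0.6931471803:ℝ) ≤ L2 := Real.log_two_gt_d9.le
  rcases le_or_gt p 3 with hp3 | hp3
  · -- small p : use r = sqrt (p-1)
    set r : ℝ := Real.sqrt (p-1) with hr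
    have hr2 : r^2 = p - 1 := Real.sq_sqrt hq0.le
    have hr1 : 1 < r := by nlinarith [Real.sqrt_nonneg (p-1), hr2]
    have hrpos : (0:ℝ) < r := by linarith
    have hrub : r^2 ≤ 2 := by nlinarith
    have h1 : 2*r - 2 ≤ r * X := by
      have h := Real.log_le_sub_one_of_pos (show (0:ℝ) < 1/r by positivity)
      have hlr : Real.log (1/r) = - Real.log r := by rw [one_div, Real.log_inv]
      rw [hlr] at h
      have hXr : X = 2 * Real.log r := by
        rw [hX, hr, Real.log_sqrt hq0.le]; ring
      have hm := mul_le_mul_of_nonneg_left h hrpos.le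
      have hrr : r * (1/r - 1) = 1 - r := by field_simp
      rw [hrr] at hm
      rw [hXr]; nlinarith [hm]
    have h2 : 2*r^2*(Y - X - L2) ≤ 1 - r^2 := by
      have hpos2 : (0:ℝ) < p/(2*(p-1)) := by positivity
      have h := Real.log_le_sub_one_of_pos hpos2
      have hlog : Real.log (p/(2*(p-1))) = Y - X - L2 := by
        rw [Real.log_div (by positivity) (by positivity),
          Real.log_mul (by norm_num) (by positivity)]
        rw [hX, hY, hL2]; ring
      rw [hlog] at h
      have hm := mul_le_mul_of_nonneg_left h (show (0:ℝ) ≤ 2*r^2 by positivity)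
      have hrr : 2*r^2 * (p/(2*(p-1)) - 1) = 1 - r^2 := by
        rw [hr2]; field_simp; ring
      rw [hrr] at hm; linarith
    have h3 : α * r^2 = (r^2 - 1) * c := by rw [hr2]; linarith [hαq]
    clear_value X Y L2 r
    -- goal : log(1+α) + (p-2)*Y ≤ (p-1)*X
    have hgoal : α + (p-2)*Y ≤ (p-1)*X := by
      rw [show p - 2 = r^2 - 1 by linarith, show p - 1 = r^2 by linarith]
      have h2r2 : (0:ℝ) < 2*r^2 := by positivity
      suffices h : 2*r^2*(α + (r^2-1)*Y) ≤ 2*r^2*(r^2*X) from le_of_mul_le_mul_left h h2r2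
      have h2' := mul_le_mul_of_nonneg_left h2 (show (0:ℝ) ≤ r^2 - 1 by nlinarith)
      have h1' := mul_le_mul_of_nonneg_left h1 (show (0:ℝ) ≤ 2*r by positivity)
      have hc2 : 2*(r^2-1)*c + 2*r^2*(r^2-1)*L2 - (r^2-1)^2 ≤ 4*r^2 - 4*r := by
        have hfac1 : (0:ℝ) ≤ 2*(r^2-1) := by nlinarith
        have hfac2 : (0:ℝ) ≤ 2*r^2*(r^2-1) := by nlinarith
        have e1 : 2*(r^2-1)*c ≤ 2*(r^2-1)*0.1322 := by
          have := mul_le_mul_of_nonneg_left hcu hfac1; linarith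
        have e2 : 2*r^2*(r^2-1)*L2 ≤ 2*r^2*(r^2-1)*0.6931471808 := by
          have := mul_le_mul_of_nonneg_left hL2u hfac2; linarith
        have key : 2*(r^2-1)*0.1322 + 2*r^2*(r^2-1)*0.6931471808 - (r^2-1)^2
            ≤ 4*r^2 - 4*r := by
          nlinarith [mul_nonneg (sub_nonneg.2 hr1.le) (sub_nonneg.2 hrub), sq_nonneg (r-1),
            mul_nonneg (mul_nonneg (sub_nonneg.2 hr1.le) (sub_nonneg.2 hr1.le)) (sub_nonneg.2 hrub),
            mul_nonneg (mul_nonneg (sub_nonneg.2 hr1.le) (sub_nonneg.2 hrub)) hrpos.le,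
            sq_nonneg (r^2-1), sq_nonneg (r*(r-1)), mul_nonneg (sq_nonneg (r-1)) hrpos.le]
        linarith
      linarith [h1', h2', hc2, h3]
    linarith [hgoal, hlog1]
  · -- large p : p-1 ≥ 2
    have hq2 : (2:ℝ) ≤ p - 1 := by linarith
    set u : ℝ := 1/(p-1) with hu
    have hu0 : 0 < u := by positivity
    have hu2 : u ≤ 1/2 := by
      rw [hu]; exact one_div_le_one_div_of_le (by norm_num) hq2
    have h1 : Y - X ≤ u := by
      have h := Real.log_le_sub_one_of_pos (show (0:ℝ) < p/(p-1) by positivity)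
      have hlog : Real.log (p/(p-1)) = Y - X := by
        rw [Real.log_div (by positivity) (by positivity), hX, hY]
      have heq : p/(p-1) - 1 = u := by rw [hu]; field_simp; ring
      rw [hlog, heq] at h; exact h
    have h2 : L2 + 1 - 2*u ≤ X := by
      have h := Real.log_le_sub_one_of_pos (show (0:ℝ) < 2/(p-1) by positivity)
      have hlog : Real.log (2/(p-1)) = L2 - X := by
        rw [Real.log_div (by norm_num) (by positivity), hX, hL2]
      have heq : 2/(p-1) - 1 = 2*u - 1 := by rw [hu]; field_simp
      rw [hlog, heq] at h; linarith
    have h4 : (p-2)*u = 1 - u := by rw [hu]; field_simp; ring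
    clear_value X Y L2 u
    have hαu : α ≤ c := by nlinarith [hαq]
    have h5 : (p-2)*Y - (p-2)*X ≤ 1 - u := by
      have := mul_le_mul_of_nonneg_left h1 (show (0:ℝ) ≤ p-2 by linarith)
      nlinarith [this, h4]
    have h6 : α + 1 - u ≤ X := by
      have : α + u ≤ L2 := by
        calc α + u ≤ c + 1/2 := by linarith
        _ ≤ 0.6322 := by linarith
        _ ≤ L2 := by linarith
      linarith
    nlinarith [hlog1, h5, h6]

private lemma s11_d3 (e a : ℝ) (he : 1 ≤ e) (s : ℝ) :
    HasDerivAt (fun t : ℝ => (a+t)^e) (e * (a+s)^(e-1)) s := by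
  have h := s11_deriv e a 1 he s
  simpa using h

set_option maxHeartbeats 4000000 in
private lemma s11_Aplus {p c α : ℝ} (hp : 2 < p) (hc : c = 1/2 - 1/Real.exp 1)
    (hα : α = (p-2)/(p-1) * c) {s : ℝ} (hs0 : 0 ≤ s) (hs1 : s ≤ 1) :
    0 ≤ p^2*(p-1)^(p-1)*s - ((p-1)+s)^p + (p-1)^p*(1-s)^p - α*p^p*s^p := by
  have hq0 : (0:ℝ) < p - 1 := by linarith
  have hp0 : (0:ℝ) < p := by linarith
  have hp1 : (1:ℝ) ≤ p := by linarith
  have hp1' : (1:ℝ) ≤ p - 1 := by linarith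
  have hcl : (0.1321:ℝ) ≤ c := by
    have : 1/Real.exp 1 ≤ 1/2.7182818283 :=
      one_div_le_one_div_of_le (by norm_num) Real.exp_one_gt_d9.le
    rw [hc]; linarith
  have hc0 : 0 ≤ c := by linarith
  have hα0 : 0 ≤ α := by
    rw [hα]; exact mul_nonneg (div_nonneg (by linarith) (by linarith)) hc0
  -- Φ1 ≥ α p^p  from s11_E
  have hΦ1 : α*p^p ≤ p^2*(p-1)^(p-1) - p^p := by
    have hE := s11_E hp
    rw [← hc, ← hα] at hE
    have eB : (p:ℝ)^p = p^(p-2)*p^2 := by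
      rw [← Real.rpow_two, ← Real.rpow_add hp0]; ring_nf
    have := mul_le_mul_of_nonneg_right hE (show (0:ℝ) ≤ p^2 by positivity)
    nlinarith [this, eB]
  -- derivative structure
  have hDd : ∀ t : ℝ, HasDerivAt
      (fun t : ℝ => p^2*(p-1)^(p-1)*t - ((p-1)+t)^p + (p-1)^p*(1-t)^p
        - t^2*(p^2*(p-1)^(p-1) - p^p))
      (p^2*(p-1)^(p-1) - p*((p-1)+t)^(p-1) - (p-1)^p*(p*(1-t)^(p-1))
        - 2*t*(p^2*(p-1)^(p-1) - p^p)) t := by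
    intro t
    have hA : HasDerivAt (fun t : ℝ => p^2*(p-1)^(p-1)*t) (p^2*(p-1)^(p-1)) t := by
      simpa using (hasDerivAt_id t).const_mul (p^2*(p-1)^(p-1))
    have hB := s11_d3 p (p-1) hp1 t
    have hC := (s11_d2 p 1 hp1 t).const_mul ((p-1)^p)
    have hE2 : HasDerivAt (fun t : ℝ => t^2*(p^2*(p-1)^(p-1) - p^p))
        (2*t*(p^2*(p-1)^(p-1) - p^p)) t := by
      have := (hasDerivAt_pow 2 t).mul_const (p^2*(p-1)^(p-1) - p^p)
      simpa using this
    have h := ((hA.sub hB).add hC).sub hE2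
    exact h.congr_deriv (by ring)
  have hD'd : ∀ t : ℝ, HasDerivAt
      (fun t : ℝ => p^2*(p-1)^(p-1) - p*((p-1)+t)^(p-1) - (p-1)^p*(p*(1-t)^(p-1))
        - 2*t*(p^2*(p-1)^(p-1) - p^p))
      ((p-1)^p*(p*((p-1)*(1-t)^(p-2))) - p*((p-1)*((p-1)+t)^(p-2))
        - 2*(p^2*(p-1)^(p-1) - p^p)) t := by
    intro t
    have hA : HasDerivAt (fun _ : ℝ => p^2*(p-1)^(p-1)) 0 t := hasDerivAt_const t _
    have hB := (s11_d3 (p-1) (p-1) hp1' t).const_mul p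
    have hC := ((s11_d2 (p-1) 1 hp1' t).const_mul p).const_mul ((p-1)^p)
    have hE2 : HasDerivAt (fun t : ℝ => 2*t*(p^2*(p-1)^(p-1) - p^p))
        (2*(p^2*(p-1)^(p-1) - p^p)) t := by
      have := ((hasDerivAt_id t).const_mul 2).mul_const (p^2*(p-1)^(p-1) - p^p)
      simpa using this
    have h := ((hA.sub hB).sub hC).sub hE2
    have he : p - 1 - 1 = p - 2 := by ring
    rw [he] at h
    exact h.congr_deriv (by ring)
  -- concavity of D'
  have hconc : ConcaveOn ℝ (Set.Icc (0:ℝ) 1)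
      (fun t : ℝ => p^2*(p-1)^(p-1) - p*((p-1)+t)^(p-1) - (p-1)^p*(p*(1-t)^(p-1))
        - 2*t*(p^2*(p-1)^(p-1) - p^p)) := by
    apply AntitoneOn.concaveOn_of_deriv (convex_Icc _ _)
      (fun x _ => (hD'd x).differentiableAt.continuousAt.continuousWithinAt)
      (fun x _ => (hD'd x).differentiableAt.differentiableWithinAt)
    intro x hx y hy hxy
    rw [interior_Icc] at hx hy
    rw [(hD'd x).deriv, (hD'd y).deriv]
    have hp2 : (0:ℝ) ≤ p - 2 := by linarith
    have n1 : (1-y)^(p-2) ≤ (1-x)^(p-2) :=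
      Real.rpow_le_rpow (by linarith [hy.2]) (by linarith) hp2
    have n2 : ((p-1)+x)^(p-2) ≤ ((p-1)+y)^(p-2) :=
      Real.rpow_le_rpow (by linarith [hx.1]) (by linarith) hp2
    have m1 := mul_le_mul_of_nonneg_left n1
      (show (0:ℝ) ≤ (p-1)^p*(p*(p-1)) by positivity)
    have m2 := mul_le_mul_of_nonneg_left n2 (show (0:ℝ) ≤ p*(p-1) by positivity)
    nlinarith [m1, m2]
  -- endpoint values
  have hD'0 : p^2*(p-1)^(p-1) - p*((p-1)+(0:ℝ))^(p-1) - (p-1)^p*(p*(1-(0:ℝ))^(p-1))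
      - 2*0*(p^2*(p-1)^(p-1) - p^p) = 0 := by
    rw [add_zero, sub_zero, Real.one_rpow]
    have eC : ((p-1):ℝ)^p = (p-1)^(p-1)*(p-1) := by
      rw [← Real.rpow_add_one hq0.ne']; ring_nf
    rw [eC]; ring
  have hD0 : p^2*(p-1)^(p-1)*(0:ℝ) - ((p-1)+(0:ℝ))^p + (p-1)^p*(1-(0:ℝ))^p
      - (0:ℝ)^2*(p^2*(p-1)^(p-1) - p^p) = 0 := by
    rw [add_zero, sub_zero, Real.one_rpow]; ring
  have hD1 : p^2*(p-1)^(p-1)*(1:ℝ) - ((p-1)+(1:ℝ))^p + (p-1)^p*(1-(1:ℝ))^p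
      - (1:ℝ)^2*(p^2*(p-1)^(p-1) - p^p) = 0 := by
    rw [show (p-1)+(1:ℝ) = p by ring, show (1:ℝ)-(1:ℝ) = 0 by ring,
      Real.zero_rpow (by linarith : p ≠ 0)]
    ring
  -- main : 0 ≤ D s
  have hDs : 0 ≤ p^2*(p-1)^(p-1)*s - ((p-1)+s)^p + (p-1)^p*(1-s)^p
      - s^2*(p^2*(p-1)^(p-1) - p^p) := by
    by_cases hcase : ∀ v ∈ Set.Icc (0:ℝ) s, 0 ≤ p^2*(p-1)^(p-1) - p*((p-1)+v)^(p-1)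
        - (p-1)^p*(p*(1-v)^(p-1)) - 2*v*(p^2*(p-1)^(p-1) - p^p)
    · have hmono : MonotoneOn
          (fun t : ℝ => p^2*(p-1)^(p-1)*t - ((p-1)+t)^p + (p-1)^p*(1-t)^p
            - t^2*(p^2*(p-1)^(p-1) - p^p)) (Set.Icc 0 s) := by
        apply monotoneOn_of_hasDerivWithinAt_nonneg (convex_Icc _ _)
          (fun x _ => (hDd x).differentiableAt.continuousAt.continuousWithinAt)
          (fun x _ => ((hDd x).hasDerivWithinAt))
        intro x hx
        rw [interior_Icc] at hx
        exact hcase x (Set.Ioo_subset_Icc_self hx)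
      have h0m : (0:ℝ) ∈ Set.Icc (0:ℝ) s := Set.left_mem_Icc.2 hs0
      have hsm : s ∈ Set.Icc (0:ℝ) s := Set.right_mem_Icc.2 hs0
      have := hmono h0m hsm hs0
      simp only at this
      linarith [hD0]
    · push_neg at hcase
      obtain ⟨v, hv, hvneg⟩ := hcase
      have hv0 : 0 < v := by
        rcases eq_or_lt_of_le hv.1 with h | h
        · exfalso; rw [← h] at hvneg; linarith [hD'0]
        · exact h
      -- D' ≤ 0 on Ioo s 1
      have hanti : AntitoneOn
          (fun t : ℝ => p^2*(p-1)^(p-1)*t - ((p-1)+t)^p + (p-1)^p*(1-t)^p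
            - t^2*(p^2*(p-1)^(p-1) - p^p)) (Set.Icc s 1) := by
        apply antitoneOn_of_hasDerivWithinAt_nonpos (convex_Icc _ _)
          (fun x _ => (hDd x).differentiableAt.continuousAt.continuousWithinAt)
          (fun x _ => ((hDd x).hasDerivWithinAt))
        intro x hx
        rw [interior_Icc] at hx
        have hvx : v < x := lt_of_le_of_lt hv.2 hx.1
        have hx0 : 0 < x := lt_trans hv0 hvx
        -- concavity : (v/x) * D' x ≤ D' v
        have h0mem : (0:ℝ) ∈ Set.Icc (0:ℝ) 1 := by constructor <;> norm_num
        have hxmem : x ∈ Set.Icc (0:ℝ) 1 := ⟨hx0.le, hx.2.le⟩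
        have hsum : (1 - v/x) + v/x = 1 := by ring
        have hb0 : 0 ≤ v/x := by positivity
        have ha0 : 0 ≤ 1 - v/x := by
          have : v/x ≤ 1 := by rw [div_le_one hx0]; linarith
          linarith
        have hcc := hconc.2 h0mem hxmem ha0 hb0 hsum
        simp only [smul_eq_mul] at hcc
        rw [show (1 - v/x) * (0:ℝ) + v/x * x = v from by field_simp; ring] at hcc
        have hz := mul_eq_zero_of_right (1 - v/x)  hD'0
        -- conclude D' x ≤ 0
        by_contra hpos
        push_neg at hpos
        have h1 : 0 < v/x := by positivity
        nlinarith [hcc, hz, hvneg, mul_pos h1 hpos]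
      have hsm : s ∈ Set.Icc s 1 := Set.left_mem_Icc.2 hs1
      have h1m : (1:ℝ) ∈ Set.Icc s 1 := Set.right_mem_Icc.2 hs1
      have := hanti hsm h1m hs1
      simp only at this
      linarith [hD1]
  -- assemble
  have hsp : s^p ≤ s^2 := by
    rcases eq_or_lt_of_le hs0 with h | h
    · rw [← h, Real.zero_rpow (by linarith : p ≠ 0)]; positivity
    · have := Real.rpow_le_rpow_of_exponent_ge h hs1 (show (2:ℝ) ≤ p by linarith)
      rwa [Real.rpow_two] at this
  have hm1 : α*p^p*s^p ≤ α*p^p*s^2 :=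
    mul_le_mul_of_nonneg_left hsp (mul_nonneg hα0 (by positivity))
  have hm2 : α*p^p*s^2 ≤ (p^2*(p-1)^(p-1) - p^p)*s^2 :=
    mul_le_mul_of_nonneg_right hΦ1 (sq_nonneg s)
  nlinarith [hDs, hm1, hm2]

set_option maxHeartbeats 2000000 in
private lemma s11_B {p c α : ℝ} (hp : 2 < p) (hc : c = 1/2 - 1/Real.exp 1)
    (hα : α = (p-2)/(p-1) * c) {u : ℝ} (hu0 : 1 ≤ u * (p-1)) (hu1 : u ≤ p-1) :
    0 ≤ (p-1)^p*(1+u)^p - ((p-1)^(2*p-2)/p^(p-2))*(1+u)^p - ((p-1)-u)^p - α*p^p*u^p := by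
  have hq0 : (0:ℝ) < p - 1 := by linarith
  have hp0 : (0:ℝ) < p := by linarith
  have hp1 : (1:ℝ) ≤ p := by linarith
  have hp1' : (1:ℝ) ≤ p - 1 := by linarith
  have hcl : (0.1321:ℝ) ≤ c := by
    have : 1/Real.exp 1 ≤ 1/2.7182818283 :=
      one_div_le_one_div_of_le (by norm_num) Real.exp_one_gt_d9.le
    rw [hc]; linarith
  have hcu : c ≤ 0.1322 := by
    have : 1/2.7182818286 ≤ 1/Real.exp 1 :=
      one_div_le_one_div_of_le (Real.exp_pos 1) Real.exp_one_lt_d9.le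
    rw [hc]; linarith
  have hc0 : 0 ≤ c := by linarith
  have hα0 : 0 ≤ α := by
    rw [hα]; exact mul_nonneg (div_nonneg (by linarith) (by linarith)) hc0
  set Q : ℝ := 1/(p-1) with hQ
  have hQ0 : 0 < Q := by positivity
  have hQu : Q ≤ u := by rw [hQ, div_le_iff₀ hq0]; linarith
  set K : ℝ := (p-1)^(2*p-2)/p^(p-2) with hK
  -- B1 : α*p*(p-1)^(p-1) ≤ (p-1)^p - K
  have hB1 : α*p*(p-1)^(p-1) ≤ (p-1)^p - K := by
    have eA : ((p-1):ℝ)^(2*p-2) = (p-1)^p*(p-1)^(p-2) := by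
      rw [← Real.rpow_add hq0]; ring_nf
    have eK : K = (p-1)^p * (((p-1)/p)^(p-2)) := by
      rw [hK, eA, Real.div_rpow hq0.le hp0.le]; ring
    have h1 : ((p-1):ℝ)/p ≤ Real.exp (-(1/p)) := by
      have := Real.add_one_le_exp (-(1/p))
      have heq : ((p-1):ℝ)/p = -(1/p) + 1 := by field_simp; ring
      linarith [heq.le]
    have h2 : (((p-1):ℝ)/p)^(p-2) ≤ Real.exp (-(1/p)*(p-2)) := by
      calc (((p-1):ℝ)/p)^(p-2) ≤ (Real.exp (-(1/p)))^(p-2) :=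
            Real.rpow_le_rpow (div_nonneg hq0.le hp0.le) h1 (by linarith)
      _ = Real.exp (-(1/p)*(p-2)) := (Real.exp_mul _ _).symm
    have h3 : Real.exp (-(1/p)*(p-2)) ≤ p/(2*(p-1)) := by
      have hee := Real.add_one_le_exp ((1/p)*(p-2))
      have hpos : (0:ℝ) < 1 + (1/p)*(p-2) := by
        have : 0 ≤ (1/p)*(p-2) := mul_nonneg (by positivity) (by linarith)
        linarith
      have heq2 : Real.exp (-(1/p)*(p-2)) = (Real.exp ((1/p)*(p-2)))⁻¹ := by
        rw [← Real.exp_neg]; ring_nf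
      rw [heq2]
      have hinv : (Real.exp ((1/p)*(p-2)))⁻¹ ≤ (1 + (1/p)*(p-2))⁻¹ := by
        apply inv_anti₀ hpos; linarith
      have heq3 : ((1:ℝ) + (1/p)*(p-2))⁻¹ = p/(2*(p-1)) := by
        rw [inv_eq_one_div]; rw [div_eq_div_iff (by positivity) (by positivity)]
        field_simp; ring
      rw [heq3] at hinv; exact hinv
    have eC : ((p-1):ℝ)^p = (p-1)^(p-1)*(p-1) := by
      rw [← Real.rpow_add_one hq0.ne']; ring_nf
    have hKb : K ≤ (p-1)^(p-1)*(p/2) := by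
      rw [eK]
      calc (p-1)^p * (((p-1)/p)^(p-2)) ≤ (p-1)^p * (p/(2*(p-1))) := by
            apply mul_le_mul_of_nonneg_left (le_trans h2 h3) (by positivity)
      _ = (p-1)^(p-1)*(p/2) := by rw [eC]; field_simp
    have hαb : α*p ≤ (p-2)/2 := by
      rw [hα]
      have hcp : 2*c*p ≤ p - 1 := by
        nlinarith [mul_le_mul_of_nonneg_left hcu (show (0:ℝ) ≤ 2*p by linarith)]
      rw [div_mul_eq_mul_div, div_mul_eq_mul_div, div_le_div_iff₀ hq0 (by norm_num)]
      nlinarith [mul_le_mul_of_nonneg_left hcp (show (0:ℝ) ≤ p-2 by linarith)]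
    have hm := mul_le_mul_of_nonneg_right hαb (show (0:ℝ) ≤ (p-1)^(p-1) by positivity)
    have eC2 : ((p-1):ℝ)^p - (p-1)^(p-1)*(p/2) = (p-1)^(p-1)*((p-2)/2) := by
      rw [eC]; ring
    nlinarith [hm, hKb, eC2]
  -- derivative of Θ
  have hΘd : ∀ t : ℝ, HasDerivAt
      (fun t : ℝ => ((p-1)^p - K)*(1+t)^p - ((p-1)-t)^p - α*p^p*t^p)
      (((p-1)^p - K)*(p*(1+t)^(p-1)) + p*((p-1)-t)^(p-1) - α*p^p*(p*t^(p-1))) t := by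
    intro t
    have hlast : HasDerivAt (fun t : ℝ => α*p^p*t^p) (α*p^p*(p*t^(p-1))) t := by
      simpa [mul_assoc] using
        (Real.hasDerivAt_rpow_const (x := t) (p := p) (Or.inr hp1)).const_mul (α*p^p)
    have h := (((s11_d1 p hp1 t).const_mul ((p-1)^p - K)).sub (s11_d2 p (p-1) hp1 t)).sub hlast
    exact h.congr_deriv (by ring)
  -- Θ' ≥ 0 on Ioo Q (p-1)
  have hΘ'nonneg : ∀ x ∈ Set.Ioo Q (p-1),
      0 ≤ ((p-1)^p - K)*(p*(1+x)^(p-1)) + p*((p-1)-x)^(p-1) - α*p^p*(p*x^(p-1)) := by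
    intro x hx
    obtain ⟨hxQ, hxq⟩ := hx
    have hx0 : 0 < x := lt_trans hQ0 hxQ
    have hp2 : (0:ℝ) ≤ p - 1 := by linarith
    have m1 : x^(p-1) ≤ ((p-1)/p)^(p-1)*(1+x)^(p-1) := by
      have hb : x ≤ ((p-1)/p)*(1+x) := by
        rw [div_mul_eq_mul_div, le_div_iff₀ hp0]; nlinarith
      calc x^(p-1) ≤ (((p-1)/p)*(1+x))^(p-1) :=
            Real.rpow_le_rpow hx0.le hb (by linarith)
      _ = ((p-1)/p)^(p-1)*(1+x)^(p-1) :=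
            Real.mul_rpow (by positivity) (by linarith)
    have hstep := mul_le_mul_of_nonneg_left m1
      (show (0:ℝ) ≤ α*p^p*p from by positivity)
    have heqm : α*p^p*p*(((p-1)/p)^(p-1)*(1+x)^(p-1)) = α*p^2*(p-1)^(p-1)*(1+x)^(p-1) := by
      rw [Real.div_rpow hq0.le hp0.le]
      rw [show (p:ℝ)^p = p^(p-1)*p by rw [← Real.rpow_add_one hp0.ne']; ring_nf]
      field_simp
    have hB1' := mul_le_mul_of_nonneg_right hB1
      (show (0:ℝ) ≤ p*(1+x)^(p-1) from by positivity)
    have hrest : (0:ℝ) ≤ p*((p-1)-x)^(p-1) := by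
      apply mul_nonneg hp0.le
      exact Real.rpow_nonneg (by linarith) _
    nlinarith [hstep, heqm, hB1', hrest]
  -- Θ(Q) ≥ 0 from s11_Aminus
  have hAm := s11_Aminus hp hc hα (u := Q) hQ0.le (by rw [hQ]; field_simp; norm_num)
  have hId : K*(1+Q)^p = p^2*(p-1)^(p-1)*Q := by
    have h1pQ : (1:ℝ) + Q = p/(p-1) := by rw [hQ]; field_simp; ring
    have eA : ((p-1):ℝ)^(2*p-2) = (p-1)^(p-2)*(p-1)^p := by
      rw [← Real.rpow_add hq0]; ring_nf
    have eB : (p:ℝ)^p = p^(p-2)*p^2 := by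
      rw [← Real.rpow_two, ← Real.rpow_add hp0]; ring_nf
    have eC : ((p-1):ℝ)^(p-1) = (p-1)^(p-2)*(p-1) := by
      rw [← Real.rpow_add_one hq0.ne']; ring_nf
    rw [hK, h1pQ, Real.div_rpow hp0.le hq0.le, eA, eB, eC, hQ]
    have hqp : ((p-1):ℝ)^p ≠ 0 := by positivity
    have hpp2 : (p:ℝ)^(p-2) ≠ 0 := by positivity
    field_simp
  have hΘQ : 0 ≤ ((p-1)^p - K)*(1+Q)^p - ((p-1)-Q)^p - α*p^p*Q^p := by
    nlinarith [hAm, hId]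
  -- monotone on Icc Q (p-1)
  have hmono : MonotoneOn
      (fun t : ℝ => ((p-1)^p - K)*(1+t)^p - ((p-1)-t)^p - α*p^p*t^p)
      (Set.Icc Q (p-1)) := by
    apply monotoneOn_of_hasDerivWithinAt_nonneg (convex_Icc _ _)
      (fun x _ => (hΘd x).differentiableAt.continuousAt.continuousWithinAt)
      (fun x hx => ((hΘd x).hasDerivWithinAt))
    intro x hx
    rw [interior_Icc] at hx
    exact hΘ'nonneg x hx
  have hQmem : Q ∈ Set.Icc Q (p-1) := Set.left_mem_Icc.2 (le_trans hQu hu1)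
  have humem : u ∈ Set.Icc Q (p-1) := ⟨hQu, hu1⟩
  have hfin := hmono hQmem humem hQu
  simp only at hfin
  nlinarith [hfin, hΘQ]

set_option maxHeartbeats 4000000 in
private lemma s11_key {p α : ℝ} (hp : 2 < p)
    (hα : α = (p-2)/(p-1) * (1/2 - 1/Real.exp 1))
    {a b : ℝ} (ha : 0 ≤ a) (hb : 0 ≤ b) (hab : a + b = 1) :
    (if (p-2)*a ≤ b then p*(1-1/p)^(p-1)*(b-(p-1)*a)*(a+b)^(p-1)
      else -((p-1)^(2*p-2)/p^(p-2))*a^p) ≥ b^p - (p-1)^p*a^p + α * |b-(p-1)*a|^p := by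
  have hq0 : (0:ℝ) < p - 1 := by linarith
  have hp0 : (0:ℝ) < p := by linarith
  have hpp : (0:ℝ) < p^p := by positivity
  have hc : (1:ℝ)/2 - 1/Real.exp 1 = 1/2 - 1/Real.exp 1 := rfl
  set s : ℝ := b - (p-1)*a with hs
  have hpb : p*b = (p-1) + s := by rw [hs]; linear_combination (p-1)*hab
  have hpa : p*a = 1 - s := by rw [hs]; linear_combination hab
  have hcnd : p*(b - (p-2)*a) = 1 + (p-1)*s := by rw [hs]; linear_combination hab
  have hs1 : s ≤ 1 := by nlinarith [mul_nonneg (show (0:ℝ) ≤ p-1 by linarith) ha]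
  -- common power identities
  have eb : p^p * b^p = ((p-1)+s)^p := by
    rw [← Real.mul_rpow hp0.le hb, hpb]
  have ea : p^p * a^p = (1-s)^p := by
    rw [← Real.mul_rpow hp0.le ha, hpa]
  have e11 : (1:ℝ) - 1/p = (p-1)/p := by field_simp
  have eqp : ((p-1)/p) ^ (p-1) = (p-1)^(p-1)/p^(p-1) := Real.div_rpow hq0.le hp0.le _
  have epp1 : p^p = p^(p-1)*p := by rw [← Real.rpow_add_one hp0.ne']; ring_nf
  rw [ge_iff_le, ← sub_nonneg]
  split_ifs with hif
  · -- case A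
    have hsge : 0 ≤ 1 + (p-1)*s := by
      rw [← hcnd]; exact mul_nonneg hp0.le (by linarith)
    rw [hab, Real.one_rpow, mul_one]
    have eX : p^p * (p*(1-1/p)^(p-1)*s) = p^2*(p-1)^(p-1)*s := by
      rw [e11, eqp, epp1]
      have : (p:ℝ)^(p-1) ≠ 0 := by positivity
      field_simp
    rcases le_or_gt 0 s with hsgn | hsgn
    · -- s ≥ 0 : A+
      rw [abs_of_nonneg hsgn]
      have hA := s11_Aplus hp hc hα hsgn hs1
      have key : p^p * (p*(1-1/p)^(p-1)*s - (b^p - (p-1)^p*a^p + α*s^p))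
          = p^2*(p-1)^(p-1)*s - ((p-1)+s)^p + (p-1)^p*(1-s)^p - α*p^p*s^p := by
        linear_combination eX - eb + ((p-1):ℝ)^p * ea
      have h2 : p^p * 0 ≤ p^p * (p*(1-1/p)^(p-1)*s - (b^p - (p-1)^p*a^p + α*s^p)) := by
        rw [mul_zero, key]; exact hA
      exact le_of_mul_le_mul_left h2 hpp
    · -- s < 0 : A-
      rw [abs_of_neg hsgn]
      have hu1 : (-s) * (p-1) ≤ 1 := by nlinarith [hsge]
      have hA := s11_Aminus hp hc hα (u := -s) (by linarith) hu1
      have ebu : p^p * b^p = ((p-1) - (-s))^p := by rw [eb]; ring_nf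
      have eau : p^p * a^p = (1 + (-s))^p := by rw [ea]; ring_nf
      have key : p^p * (p*(1-1/p)^(p-1)*s - (b^p - (p-1)^p*a^p + α*(-s)^p))
          = (p-1)^p * (1+(-s))^p - ((p-1)-(-s))^p - p^2*(p-1)^(p-1)*(-s) - α*p^p*(-s)^p := by
        linear_combination eX - ebu + ((p-1):ℝ)^p * eau
      have h2 : p^p * 0 ≤ p^p * (p*(1-1/p)^(p-1)*s - (b^p - (p-1)^p*a^p + α*(-s)^p)) := by
        rw [mul_zero, key]; exact hA
      exact le_of_mul_le_mul_left h2 hpp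
  · -- case B
    push_neg at hif
    have hslt : 1 + (p-1)*s < 0 := by
      rw [← hcnd]
      have : b - (p-2)*a < 0 := by linarith
      nlinarith [hp0, this]
    have hsneg : s < 0 := by nlinarith [hq0]
    have hu0 : 1 ≤ (-s) * (p-1) := by nlinarith [hslt]
    have hu1 : (-s) ≤ p - 1 := by
      have habq : (p-1)*(a+b) = p-1 := by rw [hab]; ring
      have hqb := mul_nonneg (show (0:ℝ) ≤ p-1 by linarith) hb
      rw [hs]; nlinarith [habq, hqb, hb]
    rw [abs_of_neg hsneg]
    have hB := s11_B hp hc hα hu0 hu1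
    have ebu : p^p * b^p = ((p-1) - (-s))^p := by rw [eb]; ring_nf
    have eau : p^p * a^p = (1 + (-s))^p := by rw [ea]; ring_nf
    have eKa : ((p-1)^(2*p-2)/p^(p-2)) * (p^p * a^p)
        = ((p-1)^(2*p-2)/p^(p-2)) * (1+(-s))^p := by rw [eau]
    have key : p^p * (-((p-1)^(2*p-2)/p^(p-2))*a^p - (b^p - (p-1)^p*a^p + α*(-s)^p))
        = (p-1)^p*(1+(-s))^p - ((p-1)^(2*p-2)/p^(p-2))*(1+(-s))^p - ((p-1)-(-s))^p
          - α*p^p*(-s)^p := by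
      linear_combination (-1 : ℝ) * eKa - ebu + ((p-1):ℝ)^p * eau
    have h2 : p^p * 0 ≤ p^p * (-((p-1)^(2*p-2)/p^(p-2))*a^p
        - (b^p - (p-1)^p*a^p + α*(-s)^p)) := by
      rw [mul_zero, key]; exact hB
    exact le_of_mul_le_mul_left h2 hpp

set_option maxHeartbeats 2000000 in
theorem stmt_11 {H : Type*} [NormedAddCommGroup H] [InnerProductSpace ℝ H]
    [SecondCountableTopology H]
    (p : ℝ) (hp : 2 < p)
    (α : ℝ) (hα : α = (p - 2) / (p - 1) * (1 / 2 - 1 / Real.exp 1))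
    (x y : H) :
    (if (p - 2) * ‖x‖ ≤ ‖y‖ then
        p * (1 - 1 / p) ^ (p - 1) * (‖y‖ - (p - 1) * ‖x‖) * (‖x‖ + ‖y‖) ^ (p - 1)
      else -((p - 1) ^ (2 * p - 2) / p ^ (p - 2)) * ‖x‖ ^ p) ≥
      ‖y‖ ^ p - (p - 1) ^ p * ‖x‖ ^ p + α * |‖y‖ - (p - 1) * ‖x‖| ^ p := by
  have hp0 : (0:ℝ) < p := by linarith
  have hxn := norm_nonneg x
  have hyn := norm_nonneg y
  rcases (add_nonneg hxn hyn).eq_or_lt with hr0 | hr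
  · -- ‖x‖ = ‖y‖ = 0
    have hx0 : ‖x‖ = 0 := by linarith
    have hy0 : ‖y‖ = 0 := by linarith
    rw [hx0, hy0]
    rw [if_pos (by simp)]
    simp [Real.zero_rpow hp0.ne']
  · set r : ℝ := ‖x‖ + ‖y‖ with hrdef
    have hrne : r ≠ 0 := ne_of_gt hr
    have hrp : (0:ℝ) < r^p := by positivity
    have habr : ‖x‖/r + ‖y‖/r = 1 := by field_simp; exact hrdef.symm
    have I := s11_key hp hα (div_nonneg hxn hr.le) (div_nonneg hyn hr.le) habr
    have hciff : ((p-2)*(‖x‖/r) ≤ ‖y‖/r) ↔ ((p-2)*‖x‖ ≤ ‖y‖) := by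
      rw [← mul_div_assoc]; exact div_le_div_iff_of_pos_right hr
    have hzdiv : ‖y‖/r - (p-1)*(‖x‖/r) = (‖y‖-(p-1)*‖x‖)/r := by ring
    have gb : r^p * ((‖y‖/r)^p) = ‖y‖^p := by
      rw [Real.div_rpow hyn hr.le]; field_simp
    have ga : r^p * ((‖x‖/r)^p) = ‖x‖^p := by
      rw [Real.div_rpow hxn hr.le]; field_simp
    have gabs : r^p * (|‖y‖/r - (p-1)*(‖x‖/r)|^p) = |‖y‖-(p-1)*‖x‖|^p := by
      rw [hzdiv, abs_div, abs_of_pos hr, Real.div_rpow (abs_nonneg _) hr.le]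
      field_simp
    have ea2 : (p-1)^p * (r^p * ((‖x‖/r)^p)) = (p-1)^p * ‖x‖^p := by rw [ga]
    have eabs2 : α * (r^p * (|‖y‖/r - (p-1)*(‖x‖/r)|^p)) = α * |‖y‖-(p-1)*‖x‖|^p := by
      rw [gabs]
    rw [ge_iff_le] at I ⊢
    split_ifs with hcond
    · rw [if_pos (hciff.mpr hcond)] at I
      have I' := mul_le_mul_of_nonneg_left I hrp.le
      have gX : r^p * (p*(1-1/p)^(p-1)*(‖y‖/r-(p-1)*(‖x‖/r))*((‖x‖/r+‖y‖/r))^(p-1))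
          = p*(1-1/p)^(p-1)*(‖y‖-(p-1)*‖x‖)*r^(p-1) := by
        rw [habr, Real.one_rpow, hzdiv,
          show r^p = r^(p-1)*r by rw [← Real.rpow_add_one hrne]; ring_nf]
        field_simp
      linarith [I', gb, ea2, eabs2, gX]
    · rw [if_neg (fun hcc => hcond (hciff.mp hcc))] at I
      have I' := mul_le_mul_of_nonneg_left I hrp.le
      have gX : r^p * (-((p-1)^(2*p-2)/p^(p-2))*((‖x‖/r)^p))
          = -((p-1)^(2*p-2)/p^(p-2))*‖x‖^p := by
        linear_combination (-((p-1)^(2*p-2)/p^(p-2))) * ga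
      linarith [I', gb, ea2, eabs2, gX]
end

section
/- Let H be a real (separable) Hilbert space, let 2 < p < ∞, and define U_p : H × H → ℝ by U_p(x,y) = p(1−1/p)^{p−1}·(‖y‖ − (p−1)‖x‖)·(‖x‖+‖y‖)^{p−1} if ‖y‖ ≥ (p−2)‖x‖, and U_p(x,y) = −((p−1)^{2p−2}/p^{p−2})·‖x‖^p if ‖y‖ < (p−2)‖x‖. Then for every fixed x ∈ H, the function y ↦ U_p(x,y) is convex on H. -/
open Set

private lemma comp_aux {H : Type*} [NormedAddCommGroup H] [InnerProductSpace ℝ H]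
    {f : H → ℝ} {g : ℝ → ℝ} {t : Set ℝ}
    (hg : ConvexOn ℝ t g) (hf : ConvexOn ℝ Set.univ f)
    (hg' : MonotoneOn g t) (hmap : ∀ y, f y ∈ t) :
    ConvexOn ℝ Set.univ (fun y => g (f y)) :=
  ⟨convex_univ, fun y₁ _ y₂ _ a b ha hb hab =>
    (hg' (hmap _) (hg.1 (hmap y₁) (hmap y₂) ha hb hab)
      (hf.2 trivial trivial ha hb hab)).trans (hg.2 (hmap y₁) (hmap y₂) ha hb hab)⟩

private lemma deriv_aux (p a : ℝ) (hp : 2 < p) (ha : 0 ≤ a) {t : ℝ}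
    (ht : (p - 2) * a < t) :
    HasDerivAt (fun t : ℝ => p * (1 - 1 / p) ^ (p - 1) * (t - (p - 1) * a) * (a + t) ^ (p - 1))
      (p * (1 - 1 / p) ^ (p - 1) * (p * (a + t) ^ (p - 2) * (t - (p - 2) * a))) t := by
  have hpos : 0 < a + t := by nlinarith
  have hb : HasDerivAt (fun t : ℝ => a + t) 1 t := (hasDerivAt_id t).const_add a
  have h1 : HasDerivAt (fun t : ℝ => (a + t) ^ (p - 1)) ((p - 1) * (a + t) ^ (p - 2) * 1) t := by
    have := (Real.hasDerivAt_rpow_const (x := a + t) (p := p - 1) (Or.inl hpos.ne')).comp t hb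
    refine this.congr_deriv ?_
    ring_nf
  have h2 : HasDerivAt (fun t : ℝ => p * (1 - 1 / p) ^ (p - 1) * (t - (p - 1) * a))
      (p * (1 - 1 / p) ^ (p - 1)) t := by
    simpa using ((hasDerivAt_id t).sub_const ((p - 1) * a)).const_mul (p * (1 - 1 / p) ^ (p - 1))
  have h3 := h2.mul h1
  refine h3.congr_deriv ?_
  have e : (a + t) ^ (p - 1) = (a + t) ^ (p - 2) * (a + t) := by
    rw [← Real.rpow_add_one hpos.ne']; ring_nf
  rw [e]; ring

private lemma cont_aux (p a : ℝ) (hp : 2 < p) (ha : 0 ≤ a) :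
    ContinuousOn (fun t : ℝ => p * (1 - 1 / p) ^ (p - 1) * (t - (p - 1) * a) * (a + t) ^ (p - 1))
      (Ici ((p - 2) * a)) := by
  apply ContinuousOn.mul
  · exact (continuousOn_const.mul (continuousOn_id.sub continuousOn_const))
  · intro t _
    exact ((Real.continuousAt_rpow_const (a + t) (p - 1)
      (Or.inr (by linarith))).comp ((continuous_const.add continuous_id).continuousAt)).continuousWithinAt

private lemma convex_aux (p a : ℝ) (hp : 2 < p) (ha : 0 ≤ a) :
    ConvexOn ℝ (Ici ((p - 2) * a))
      (fun t : ℝ => p * (1 - 1 / p) ^ (p - 1) * (t - (p - 1) * a) * (a + t) ^ (p - 1)) := by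
  apply MonotoneOn.convexOn_of_deriv (convex_Ici _) (cont_aux p a hp ha)
  · rw [interior_Ici]
    exact fun t ht => (deriv_aux p a hp ha ht).differentiableAt.differentiableWithinAt
  · rw [interior_Ici]
    intro s hs t ht hst
    rw [(deriv_aux p a hp ha hs).deriv, (deriv_aux p a hp ha ht).deriv]
    have hc : (0:ℝ) ≤ p * (1 - 1 / p) ^ (p - 1) := by
      have : (0:ℝ) < 1 - 1/p := by
        rw [sub_pos, div_lt_one (by linarith)]; linarith
      positivity
    have hs' : (0:ℝ) < a + s := by have := mem_Ioi.mp hs; nlinarith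
    have hss := mem_Ioi.mp hs
    have A : (a + s) ^ (p - 2) ≤ (a + t) ^ (p - 2) :=
      Real.rpow_le_rpow hs'.le (by linarith) (by linarith)
    have hA' : (0:ℝ) ≤ (a + t) ^ (p - 2) := Real.rpow_nonneg (by linarith) _
    have key : (a + s) ^ (p - 2) * (s - (p - 2) * a) ≤ (a + t) ^ (p - 2) * (t - (p - 2) * a) :=
      mul_le_mul A (by linarith) (by linarith) hA'
    have := mul_le_mul_of_nonneg_left (mul_le_mul_of_nonneg_left key (by linarith : (0:ℝ) ≤ p)) hc
    linarith [this]

private lemma mono_aux (p a : ℝ) (hp : 2 < p) (ha : 0 ≤ a) :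
    MonotoneOn (fun t : ℝ => p * (1 - 1 / p) ^ (p - 1) * (t - (p - 1) * a) * (a + t) ^ (p - 1))
      (Ici ((p - 2) * a)) := by
  apply monotoneOn_of_deriv_nonneg (convex_Ici _) (cont_aux p a hp ha)
  · rw [interior_Ici]
    exact fun t ht => (deriv_aux p a hp ha ht).differentiableAt.differentiableWithinAt
  · rw [interior_Ici]
    intro t ht
    rw [(deriv_aux p a hp ha ht).deriv]
    have ht' := mem_Ioi.mp ht
    have h1 : (0:ℝ) < 1 - 1/p := by
      rw [sub_pos, div_lt_one (by linarith)]; linarith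
    have h2 : (0:ℝ) < a + t := by nlinarith
    have h3 : (0:ℝ) ≤ t - (p-2)*a := by linarith
    positivity

theorem stmt_12 {H : Type*} [NormedAddCommGroup H] [InnerProductSpace ℝ H]
    [SecondCountableTopology H]
    (p : ℝ) (hp : 2 < p) (x : H) :
    ConvexOn ℝ Set.univ (fun y : H =>
      if (p - 2) * ‖x‖ ≤ ‖y‖ then
        p * (1 - 1 / p) ^ (p - 1) * (‖y‖ - (p - 1) * ‖x‖) * (‖x‖ + ‖y‖) ^ (p - 1)
      else -((p - 1) ^ (2 * p - 2) / p ^ (p - 2)) * ‖x‖ ^ p) := by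
  have ha : (0:ℝ) ≤ ‖x‖ := norm_nonneg x
  have hcomp := comp_aux (convex_aux p ‖x‖ hp ha)
      ((convexOn_const ((p - 2) * ‖x‖) convex_univ).sup convexOn_univ_norm)
      (mono_aux p ‖x‖ hp ha)
      (fun y : H => mem_Ici.mpr (le_max_left _ _))
  have key : (fun y : H =>
      if (p - 2) * ‖x‖ ≤ ‖y‖ then
        p * (1 - 1 / p) ^ (p - 1) * (‖y‖ - (p - 1) * ‖x‖) * (‖x‖ + ‖y‖) ^ (p - 1)
      else -((p - 1) ^ (2 * p - 2) / p ^ (p - 2)) * ‖x‖ ^ p) =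
      (fun y : H => (fun t : ℝ => p * (1 - 1 / p) ^ (p - 1) * (t - (p - 1) * ‖x‖) *
        (‖x‖ + t) ^ (p - 1)) (((fun _ : H => (p - 2) * ‖x‖) ⊔ fun y : H => ‖y‖) y)) := by
    funext y
    by_cases hcase : (p - 2) * ‖x‖ ≤ ‖y‖
    · rw [if_pos hcase]
      simp only [Pi.sup_apply, max_eq_right hcase]
    · rw [if_neg hcase]
      push_neg at hcase
      simp only [Pi.sup_apply, max_eq_left hcase.le]
      have hax : 0 < ‖x‖ := by nlinarith [norm_nonneg y]
      have h1 : ‖x‖ + (p - 2) * ‖x‖ = (p - 1) * ‖x‖ := by ring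
      rw [h1, Real.mul_rpow (by linarith) hax.le]
      have h2 : (1 - 1 / p : ℝ) = (p - 1) / p := by field_simp
      rw [h2, Real.div_rpow (by linarith : (0:ℝ) ≤ p - 1) (by linarith : (0:ℝ) ≤ p)]
      have e3 : (p - 1 : ℝ) ^ (p - 1) * (p - 1) ^ (p - 1) = (p - 1) ^ (2 * p - 2) := by
        rw [← Real.rpow_add (by linarith)]; ring_nf
      have e4 : ‖x‖ ^ (p - 1) * ‖x‖ = ‖x‖ ^ p := by
        rw [← Real.rpow_add_one hax.ne']; ring_nf
      have e5 : (p : ℝ) ^ (p - 1) = p ^ (p - 2) * p := by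
        rw [← Real.rpow_add_one (by linarith : (p:ℝ) ≠ 0)]; ring_nf
      have hQ : (0:ℝ) < p ^ (p - 2) := Real.rpow_pos_of_pos (by linarith) _
      rw [e5, ← e3, ← e4]
      field_simp
      ring
  rw [key]
  exact hcomp
end

section
/- Let 1 < p < 2, set β_p = sin^{p−1}(π/(2p))/cos(π/(2p)), and define V_p : ℝ × ℝ → ℝ by V_p(x,y) = −β_p · Re(((|x| : ℂ) + i y)^p), where the complex power is the principal branch (this equals −β_p R^p cos(pθ) in the polar coordinates |x| = R cos θ, y = R sin θ with θ ∈ [−π/2, π/2]). Then for every fixed x ∈ ℝ, the function y ↦ V_p(x,y) is convex on ℝ. -/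
open Real

private lemma re_cpow_real' {z : ℂ} (hz : z ≠ 0) (r : ℝ) :
    (z ^ (r : ℂ)).re = ‖z‖ ^ r * Real.cos (r * z.arg) := by
  rw [Complex.cpow_def_of_ne_zero hz, Complex.exp_re]
  have h1 : (Complex.log z * (r : ℂ)).re = Real.log ‖z‖ * r := by
    simp [Complex.mul_re, Complex.log_re]
  have h2 : (Complex.log z * (r : ℂ)).im = z.arg * r := by
    simp [Complex.mul_im, Complex.log_im]
  rw [h1, h2, Real.rpow_def_of_pos (norm_pos_iff.mpr hz), mul_comm z.arg r]

private lemma re_cpow_nonneg' {z : ℂ} (hz : 0 < z.re) {r : ℝ} (hr : |r| ≤ 1) :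
    0 ≤ (z ^ (r : ℂ)).re := by
  have hz0 : z ≠ 0 := by
    intro h; rw [h] at hz; simp at hz
  rw [re_cpow_real' hz0 r]
  refine mul_nonneg (Real.rpow_nonneg (norm_nonneg z) r) ?_
  have harg : |z.arg| < π / 2 := Complex.abs_arg_lt_pi_div_two_iff.2 (Or.inl hz)
  have h : |r * z.arg| ≤ π / 2 := by
    rw [abs_mul]
    calc |r| * |z.arg| ≤ 1 * (π / 2) :=
          mul_le_mul hr harg.le (abs_nonneg _) zero_le_one
      _ = π / 2 := one_mul _
  obtain ⟨h1, h2⟩ := abs_le.mp h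
  exact Real.cos_nonneg_of_mem_Icc ⟨by linarith, h2⟩

theorem stmt_14 (p : ℝ) (hp1 : 1 < p) (hp2 : p < 2)
    (β : ℝ) (hβ : β = Real.sin (π / (2 * p)) ^ (p - 1) / Real.cos (π / (2 * p)))
    (x : ℝ) :
    ConvexOn ℝ Set.univ (fun y : ℝ =>
      -β * ((((|x| : ℝ) : ℂ) + Complex.I * (y : ℂ)) ^ (p : ℂ)).re) := by
  have hp0 : 0 < p := by linarith
  have hβpos : 0 < β := by
    have ht1 : 0 < π / (2 * p) := by positivity
    have ht2 : π / (2 * p) < π / 2 := by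
      apply div_lt_div_of_pos_left Real.pi_pos (by linarith) (by linarith)
    have hsin : 0 < Real.sin (π / (2 * p)) :=
      Real.sin_pos_of_pos_of_lt_pi ht1 (by linarith [Real.pi_pos])
    have hcos : 0 < Real.cos (π / (2 * p)) :=
      Real.cos_pos_of_mem_Ioo ⟨by linarith, ht2⟩
    rw [hβ]
    positivity
  set a : ℝ := |x| with ha
  rcases eq_or_lt_of_le (abs_nonneg x) with h0 | hapos
  · -- case a = 0 : function is c * |y|^p with c ≥ 0
    have hfun : (fun y : ℝ =>
        -β * ((((a : ℝ) : ℂ) + Complex.I * (y : ℂ)) ^ (p : ℂ)).re)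
        = fun y : ℝ => (-β * Real.cos (p * (π / 2))) * |y| ^ p := by
      funext y
      have ha0 : a = 0 := ha.trans h0.symm
      have him : (((a : ℝ) : ℂ) + Complex.I * (y : ℂ)).im = y := by simp
      have hre : (((a : ℝ) : ℂ) + Complex.I * (y : ℂ)).re = 0 := by simp [ha0]
      have habs : ‖((a : ℝ) : ℂ) + Complex.I * (y : ℂ)‖ = |y| := by
        simp [ha0, Complex.norm_def, Complex.normSq_apply, Real.sqrt_mul_self_eq_abs]
      rcases lt_trichotomy y 0 with hy | hy | hy
      · have hz0 : ((a : ℝ) : ℂ) + Complex.I * (y : ℂ) ≠ 0 := by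
          intro h; rw [h] at him; simp at him; exact hy.ne him.symm
        rw [re_cpow_real' hz0 p, habs]
        have harg : (((a : ℝ) : ℂ) + Complex.I * (y : ℂ)).arg = -(π / 2) := by
          rw [Complex.arg_eq_neg_pi_div_two_iff]
          exact ⟨hre, by rw [him]; exact hy⟩
        rw [harg, show p * -(π / 2) = -(p * (π / 2)) by ring, Real.cos_neg]
        ring
      · subst hy
        have : ((a : ℝ) : ℂ) + Complex.I * ((0 : ℝ) : ℂ) = 0 := by simp [ha0]
        rw [this, Complex.zero_cpow (by exact_mod_cast hp0.ne' : (p : ℂ) ≠ 0)]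
        simp [Real.zero_rpow hp0.ne']
      · have hz0 : ((a : ℝ) : ℂ) + Complex.I * (y : ℂ) ≠ 0 := by
          intro h; rw [h] at him; simp at him; exact hy.ne' him.symm
        rw [re_cpow_real' hz0 p, habs]
        have harg : (((a : ℝ) : ℂ) + Complex.I * (y : ℂ)).arg = π / 2 := by
          rw [Complex.arg_eq_pi_div_two_iff]
          exact ⟨hre, by rw [him]; exact hy⟩
        rw [harg]
        ring
    rw [hfun]
    have hc : 0 ≤ -β * Real.cos (p * (π / 2)) := by
      have hcos : Real.cos (p * (π / 2)) ≤ 0 := by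
        apply Real.cos_nonpos_of_pi_div_two_le_of_le
        · nlinarith [Real.pi_pos]
        · nlinarith [Real.pi_pos]
      nlinarith
    have habs_conv : ConvexOn ℝ Set.univ (fun y : ℝ => |y|) := by
      exact
        (convexOn_univ_norm : ConvexOn ℝ Set.univ (norm : ℝ → ℝ))
    have himg_eq : (fun y : ℝ => |y|) '' Set.univ = Set.Ici (0 : ℝ) := by
      ext t
      constructor
      · rintro ⟨y, -, rfl⟩; exact abs_nonneg y
      · intro ht; exact ⟨t, Set.mem_univ t, abs_of_nonneg ht⟩
    have hmono : MonotoneOn (fun t : ℝ => t ^ p) (Set.Ici (0 : ℝ)) :=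
      fun s hs t _ hst => Real.rpow_le_rpow hs hst hp0.le
    have hcomp : ConvexOn ℝ Set.univ ((fun t : ℝ => t ^ p) ∘ fun y : ℝ => |y|) :=
      ConvexOn.comp (himg_eq ▸ convexOn_rpow hp1.le) habs_conv (himg_eq ▸ hmono)
    have := hcomp.smul hc
    simpa [Function.comp, smul_eq_mul] using this
  · -- case a > 0
    have hre : ∀ y : ℝ, (((a : ℝ) : ℂ) + Complex.I * (y : ℂ)).re = a := by
      intro y; simp
    have hslit : ∀ y : ℝ, ((a : ℝ) : ℂ) + Complex.I * (y : ℂ) ∈ Complex.slitPlane := by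
      intro y
      exact Complex.mem_slitPlane_iff.2 (Or.inl (by rw [hre]; exact hapos))
    have hbase : ∀ y : ℝ, HasDerivAt
        (fun y : ℝ => ((a : ℝ) : ℂ) + Complex.I * (y : ℂ)) Complex.I y := by
      intro y
      have h1 : HasDerivAt (fun y : ℝ => ((y : ℝ) : ℂ)) 1 y := by
        exact Complex.ofRealCLM.hasDerivAt (x := y)
      simpa using (h1.const_mul Complex.I).const_add (((a : ℝ) : ℂ))
    have hcpow : ∀ (c : ℂ) (y : ℝ), HasDerivAt
        (fun y : ℝ => (((a : ℝ) : ℂ) + Complex.I * (y : ℂ)) ^ c)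
        (c * (((a : ℝ) : ℂ) + Complex.I * (y : ℂ)) ^ (c - 1) * Complex.I) y := by
      intro c y
      have h := (Complex.hasStrictDerivAt_cpow_const (c := c)
        (hslit y)).hasDerivAt.comp y (hbase y)
      exact h
    have hd1 : ∀ y : ℝ, HasDerivAt (fun y : ℝ =>
        -β * ((((a : ℝ) : ℂ) + Complex.I * (y : ℂ)) ^ (p : ℂ)).re)
        (-β * ((p : ℂ) * (((a : ℝ) : ℂ) + Complex.I * (y : ℂ)) ^ ((p : ℂ) - 1)
          * Complex.I).re) y := by
      intro y
      have hgre := Complex.reCLM.hasFDerivAt.comp_hasDerivAt y (hcpow (p : ℂ) y)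
      simpa only [Function.comp_def, Complex.reCLM_apply] using hgre.const_mul (-β)
    have hd2 : ∀ y : ℝ, HasDerivAt (fun y : ℝ =>
        -β * ((p : ℂ) * (((a : ℝ) : ℂ) + Complex.I * (y : ℂ)) ^ ((p : ℂ) - 1)
          * Complex.I).re)
        (-β * ((p : ℂ) * ((((p : ℂ) - 1) * (((a : ℝ) : ℂ) + Complex.I * (y : ℂ))
          ^ ((p : ℂ) - 1 - 1) * Complex.I)) * Complex.I).re) y := by
      intro y
      have hg2 := ((hcpow ((p : ℂ) - 1) y).const_mul (p : ℂ)).mul_const Complex.I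
      have hgre := Complex.reCLM.hasFDerivAt.comp_hasDerivAt y hg2
      simpa only [Function.comp_def, Complex.reCLM_apply, mul_assoc]
        using hgre.const_mul (-β)
    have hnonneg : ∀ y : ℝ,
        0 ≤ -β * ((p : ℂ) * ((((p : ℂ) - 1) * (((a : ℝ) : ℂ) + Complex.I * (y : ℂ))
          ^ ((p : ℂ) - 1 - 1) * Complex.I)) * Complex.I).re := by
      intro y
      set z : ℂ := ((a : ℝ) : ℂ) + Complex.I * (y : ℂ) with hz
      have hexp : (p : ℂ) - 1 - 1 = ((p - 2 : ℝ) : ℂ) := by push_cast; ring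
      have hwre : 0 ≤ (z ^ ((p : ℂ) - 1 - 1)).re := by
        rw [hexp]
        refine re_cpow_nonneg' (by rw [hz, hre]; exact hapos) ?_
        rw [abs_of_nonpos (by linarith)]
        linarith
      have key : (p : ℂ) * ((((p : ℂ) - 1) * z ^ ((p : ℂ) - 1 - 1) * Complex.I))
          * Complex.I = ((-(p * (p - 1)) : ℝ) : ℂ) * z ^ ((p : ℂ) - 1 - 1) := by
        have hI : Complex.I * Complex.I = -1 := Complex.I_mul_I
        push_cast
        linear_combination ((p : ℂ) * ((p : ℂ) - 1) * z ^ ((p : ℂ) - 1 - 1)) * hI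
      rw [key, Complex.re_ofReal_mul]
      have h1 : 0 ≤ p * (p - 1) := by nlinarith
      have h2 := mul_nonneg (mul_nonneg hβpos.le h1) hwre
      nlinarith [h2]
    have hdiff : Differentiable ℝ (fun y : ℝ =>
        -β * ((((a : ℝ) : ℂ) + Complex.I * (y : ℂ)) ^ (p : ℂ)).re) :=
      fun y => (hd1 y).differentiableAt
    refine convexOn_of_hasDerivWithinAt2_nonneg
      (f' := fun y : ℝ => -β * ((p : ℂ) * (((a : ℝ) : ℂ) + Complex.I * (y : ℂ))
        ^ ((p : ℂ) - 1) * Complex.I).re)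
      (f'' := fun y : ℝ => -β * ((p : ℂ) * ((((p : ℂ) - 1)
        * (((a : ℝ) : ℂ) + Complex.I * (y : ℂ)) ^ ((p : ℂ) - 1 - 1) * Complex.I))
        * Complex.I).re)
      convex_univ hdiff.continuous.continuousOn ?_ ?_ ?_
    · intro y _; exact (hd1 y).hasDerivWithinAt
    · intro y _; exact (hd2 y).hasDerivWithinAt
    · intro y _; exact hnonneg y
end

section
/- For every real p ≥ 2, one has sin(π/(2p)) / sin(π/(2(p−1))) ≤ ((p−1)/p)^{1/2}. -/
open Real

lemma aux_mono {u v : ℝ} (hu : 0 < u) (huv : u ≤ v) (hv : v ≤ π / 4) :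
    Real.sin u ^ 2 / u ≤ Real.sin v ^ 2 / v := by
  have hπ4 : π / 4 ≤ 1 := by linarith [Real.pi_le_four]
  have key : MonotoneOn (fun t => Real.sin t ^ 2 / t) (Set.Icc u v) := by
    have hderiv : ∀ t ∈ Set.Icc u v,
        HasDerivAt (fun t => Real.sin t ^ 2 / t)
          ((2 * Real.sin t * Real.cos t * t - Real.sin t ^ 2 * 1) / t ^ 2) t := by
      intro t ht
      have ht0 : t ≠ 0 := ne_of_gt (lt_of_lt_of_le hu ht.1)
      have h1 : HasDerivAt (fun t => Real.sin t ^ 2) (2 * Real.sin t * Real.cos t) t := by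
        have := (Real.hasDerivAt_sin t).fun_pow 2
        simpa [mul_comm, mul_assoc, mul_left_comm] using this
      exact h1.div (hasDerivAt_id t) ht0
    apply monotoneOn_of_deriv_nonneg (convex_Icc u v)
    · exact fun t ht => (hderiv t ht).continuousAt.continuousWithinAt
    · intro t ht
      rw [interior_Icc] at ht
      exact ((hderiv t (Set.mem_Icc_of_Ioo ht)).differentiableAt).differentiableWithinAt
    · intro t ht
      rw [interior_Icc] at ht
      have ht' : t ∈ Set.Icc u v := Set.mem_Icc_of_Ioo ht
      rw [(hderiv t ht').deriv]
      have ht0 : 0 < t := lt_of_lt_of_le hu ht'.1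
      have ht1 : t ≤ 1 := le_trans (le_trans ht'.2 hv) hπ4
      have hsin : 0 ≤ Real.sin t := Real.sin_nonneg_of_nonneg_of_le_pi ht0.le
        (by nlinarith [Real.pi_gt_three])
      have hsinle : Real.sin t ≤ t := Real.sin_le ht0.le
      have hcos : (1:ℝ)/2 ≤ Real.cos t := by
        nlinarith [Real.one_sub_sq_div_two_le_cos (x := t)]
      have e1 : Real.sin t * Real.sin t ≤ Real.sin t * t :=
        mul_le_mul_of_nonneg_left hsinle hsin
      have e2 : 0 ≤ (2 * Real.cos t - 1) * (Real.sin t * t) :=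
        mul_nonneg (by linarith) (mul_nonneg hsin ht0.le)
      apply div_nonneg _ (by positivity)
      nlinarith [e1, e2]
  exact key (Set.left_mem_Icc.2 huv) (Set.right_mem_Icc.2 huv) huv

theorem stmt_16 (p : ℝ) (hp : 2 ≤ p) :
    Real.sin (π / (2 * p)) / Real.sin (π / (2 * (p - 1))) ≤ ((p - 1) / p) ^ ((1 : ℝ) / 2) := by
  have hπ : 0 < π := Real.pi_pos
  have hp0 : 0 < p := by linarith
  have hp1 : 0 < p - 1 := by linarith
  set x := π / (2 * p) with hx
  set y := π / (2 * (p - 1)) with hy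
  have hx0 : 0 < x := by positivity
  have hy0 : 0 < y := by positivity
  have hxy : x ≤ y := by
    apply div_le_div_of_nonneg_left hπ.le (by linarith) (by linarith)
  have hx4 : x ≤ π / 4 := by
    rw [hx, div_le_div_iff₀ (by linarith) (by norm_num : (0:ℝ) < 4)]; nlinarith
  have hy2 : y ≤ π / 2 := by
    rw [hy, div_le_div_iff₀ (by linarith) (by norm_num : (0:ℝ) < 2)]; nlinarith
  have hsx : 0 < Real.sin x := Real.sin_pos_of_pos_of_lt_pi hx0 (by linarith)
  have hsy : 0 < Real.sin y := Real.sin_pos_of_pos_of_lt_pi hy0 (by linarith)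
  have hxp : x * (2 * p) = π := by rw [hx]; field_simp [hp0.ne']
  have hyp : y * (2 * (p - 1)) = π := by rw [hy]; field_simp [hp1.ne']
  -- key inequality
  have key : p * Real.sin x ^ 2 ≤ (p - 1) * Real.sin y ^ 2 := by
    rcases le_or_gt 3 p with h3 | h3
    · -- y ≤ π/4, use monotonicity directly
      have hy4 : y ≤ π / 4 := by
        rw [hy, div_le_div_iff₀ (by linarith) (by norm_num : (0:ℝ) < 4)]; nlinarith
      have hmono := aux_mono hx0 hxy hy4
      rw [div_le_div_iff₀ hx0 hy0] at hmono
      have hmul := mul_le_mul_of_nonneg_right hmono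
        (le_of_lt (by positivity : (0:ℝ) < 2 * p * (p - 1)))
      have e1 : Real.sin x ^ 2 * y * (2 * p * (p - 1)) = p * Real.sin x ^ 2 * π := by
        rw [← hyp]; ring
      have e2 : Real.sin y ^ 2 * x * (2 * p * (p - 1)) = (p - 1) * Real.sin y ^ 2 * π := by
        rw [← hxp]; ring
      rw [e1, e2] at hmul
      exact le_of_mul_le_mul_right hmul hπ
    · -- 2 ≤ p < 3
      have hA : p * Real.sin x ^ 2 ≤ 1 := by
        have h44 : (0:ℝ) < π / 4 := by positivity
        have hmono := aux_mono hx0 hx4 le_rfl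
        have hs4 : Real.sin (π / 4) ^ 2 = 1 / 2 := by
          rw [Real.sin_pi_div_four, div_pow, Real.sq_sqrt (by norm_num : (0:ℝ) ≤ 2)]
          norm_num
        rw [hs4, div_le_div_iff₀ hx0 h44] at hmono
        -- hmono : sin x ^ 2 * (π / 4) ≤ 1 / 2 * x
        have hm := mul_le_mul_of_nonneg_right hmono (le_of_lt hp0)
        have e : 2 * x * p = π := by rw [← hxp]; ring
        have hfin : p * Real.sin x ^ 2 * π ≤ 1 * π := by nlinarith [hm, e]
        exact le_of_mul_le_mul_right hfin hπ
      have hB : 1 ≤ (p - 1) * Real.sin y ^ 2 := by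
        have hy4 : π / 4 ≤ y := by
          rw [hy, div_le_div_iff₀ (by norm_num : (0:ℝ) < 4) (by linarith)]; nlinarith
        have hw : 0 ≤ π - 2 * y := by linarith
        have hw2 : π - 2 * y ≤ π / 2 := by linarith
        have hc := Real.one_sub_mul_le_cos hw hw2
        rw [Real.cos_pi_sub (2 * y)] at hc
        -- hc : 1 - 2 / π * (π - 2 * y) ≤ - cos (2 * y)
        have hc' : π * Real.cos (2 * y) ≤ π - 4 * y := by
          have e : (1 - 2 / π * (π - 2 * y)) * π = π - 2 * (π - 2 * y) := by
            field_simp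
          nlinarith [mul_le_mul_of_nonneg_right hc hπ.le, e]
        have hsq : Real.sin y ^ 2 = 1 / 2 - Real.cos (2 * y) / 2 := Real.sin_sq_eq_half_sub y
        have h1 : 2 * y ≤ π * Real.sin y ^ 2 := by rw [hsq]; nlinarith [hc']
        have h1' : 2 * y ≤ (y * (2 * (p - 1))) * Real.sin y ^ 2 := by rw [hyp]; exact h1
        nlinarith [h1', hy0]
      linarith
  -- conclude
  rw [← Real.sqrt_eq_rpow]
  rw [show Real.sin x / Real.sin y = Real.sqrt ((Real.sin x / Real.sin y) ^ 2) by
    rw [Real.sqrt_sq (by positivity)]]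
  apply Real.sqrt_le_sqrt
  rw [div_pow, div_le_div_iff₀ (by positivity) hp0]
  nlinarith
end

section
/- For every real p ≥ 2, one has cos(π/(2p))^{p−1} ≥ 2^{−1/2}. -/
open Real Set

lemma aux_hasDeriv (x : ℝ) (hc : Real.cos x ≠ 0) :
    HasDerivAt (fun y => y * (Real.sin y / Real.cos y) + 2 * Real.log (Real.cos y))
      (1 * (Real.sin x / Real.cos x) +
        x * ((Real.cos x * Real.cos x - Real.sin x * (-Real.sin x)) / Real.cos x ^ 2)
        + 2 * ((Real.cos x)⁻¹ * (-Real.sin x))) x := by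
  have htan : HasDerivAt (fun y => Real.sin y / Real.cos y)
      ((Real.cos x * Real.cos x - Real.sin x * (-Real.sin x)) / Real.cos x ^ 2) x :=
    (Real.hasDerivAt_sin x).div (Real.hasDerivAt_cos x) hc
  have hmul := (hasDerivAt_id x).mul htan
  have hlog : HasDerivAt (fun y => Real.log (Real.cos y))
      ((Real.cos x)⁻¹ * (-Real.sin x)) x :=
    (Real.hasDerivAt_log hc).comp x (Real.hasDerivAt_cos x)
  exact hmul.add (hlog.const_mul 2)

lemma aux_phi_nonneg : ∀ x ∈ Set.Ico (0:ℝ) (π/2),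
    0 ≤ x * (Real.sin x / Real.cos x) + 2 * Real.log (Real.cos x) := by
  set φ : ℝ → ℝ := fun x => x * (Real.sin x / Real.cos x) + 2 * Real.log (Real.cos x) with hφ
  have hcos : ∀ x ∈ Set.Ico (0:ℝ) (π/2), 0 < Real.cos x := by
    intro x hx
    exact Real.cos_pos_of_mem_Ioo ⟨by linarith [hx.1, Real.pi_pos], hx.2⟩
  have hmono : MonotoneOn φ (Set.Ico (0:ℝ) (π/2)) := by
    apply monotoneOn_of_deriv_nonneg (convex_Ico _ _)
    · apply ContinuousOn.add
      · exact continuousOn_id.mul (Real.continuousOn_sin.div Real.continuousOn_cos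
          (fun x hx => (hcos x hx).ne'))
      · exact (Real.continuousOn_cos.log (fun x hx => (hcos x hx).ne')).const_smul (2:ℝ)
    · intro x hx
      rw [interior_Ico] at hx
      exact (aux_hasDeriv x (hcos x ⟨hx.1.le, hx.2⟩).ne').differentiableAt.differentiableWithinAt
    · intro x hx
      rw [interior_Ico] at hx
      have hcx : 0 < Real.cos x := hcos x ⟨hx.1.le, hx.2⟩
      rw [(aux_hasDeriv x hcx.ne').deriv]
      have hsq : Real.cos x * Real.cos x - Real.sin x * (-Real.sin x) = 1 := by
        nlinarith [Real.sin_sq_add_cos_sq x]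
      rw [hsq, one_mul]
      have hsc : Real.sin x * Real.cos x ≤ x := by
        have h2 : Real.sin (2 * x) ≤ 2 * x := Real.sin_le (by linarith [hx.1])
        rw [Real.sin_two_mul] at h2
        linarith
      have key : Real.sin x / Real.cos x ≤ x / Real.cos x ^ 2 := by
        rw [div_le_div_iff₀ hcx (by positivity)]
        calc Real.sin x * Real.cos x ^ 2 = (Real.sin x * Real.cos x) * Real.cos x := by ring
          _ ≤ x * Real.cos x := mul_le_mul_of_nonneg_right hsc hcx.le
      have h1 : x * (1 / Real.cos x ^ 2) = x / Real.cos x ^ 2 := by ring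
      have h2 : 2 * ((Real.cos x)⁻¹ * (-Real.sin x)) = -(2 * (Real.sin x / Real.cos x)) := by
        field_simp
      rw [h1, h2]
      linarith
  intro x hx
  have h0 : φ 0 = 0 := by simp [hφ]
  have := hmono (Set.mem_Ico.mpr ⟨le_refl 0, by linarith [Real.pi_pos]⟩) hx hx.1
  rw [h0] at this
  exact this

-- derivative of F y = (- log (cos y)) / y^2
lemma aux_F_deriv (x : ℝ) (hx0 : x ≠ 0) (hc : Real.cos x ≠ 0) :
    HasDerivAt (fun y => (- Real.log (Real.cos y)) / y ^ 2)
      ((-( (Real.cos x)⁻¹ * (-Real.sin x)) * x ^ 2 - (- Real.log (Real.cos x)) * (2 * x ^ 1))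
        / (x ^ 2) ^ 2) x := by
  have hlog : HasDerivAt (fun y => - Real.log (Real.cos y))
      (-((Real.cos x)⁻¹ * (-Real.sin x))) x :=
    (((Real.hasDerivAt_log hc).comp x (Real.hasDerivAt_cos x))).neg
  have hpow : HasDerivAt (fun y : ℝ => y ^ 2) ((2:ℕ) * x ^ 1) x := hasDerivAt_pow 2 x
  exact hlog.div (by simpa using hpow) (pow_ne_zero 2 hx0)

lemma aux_F_mono : MonotoneOn (fun y => (- Real.log (Real.cos y)) / y ^ 2)
    (Set.Ioc (0:ℝ) (π/4)) := by
  have hsub : ∀ y ∈ Set.Ioc (0:ℝ) (π/4), y ∈ Set.Ico (0:ℝ) (π/2) ∧ 0 < Real.cos y := by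
    intro y hy
    have hy2 : y < π/2 := lt_of_le_of_lt hy.2 (by linarith [Real.pi_pos])
    exact ⟨⟨hy.1.le, hy2⟩, Real.cos_pos_of_mem_Ioo ⟨by linarith [hy.1, Real.pi_pos], hy2⟩⟩
  apply monotoneOn_of_deriv_nonneg (convex_Ioc _ _)
  · apply ContinuousOn.div
    · exact (Real.continuousOn_cos.log (fun y hy => (hsub y hy).2.ne')).neg
    · exact (continuousOn_id.pow 2)
    · intro y hy; exact pow_ne_zero 2 hy.1.ne'
  · intro y hy
    rw [interior_Ioc] at hy
    have h := hsub y ⟨hy.1, hy.2.le⟩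
    exact (aux_F_deriv y hy.1.ne' h.2.ne').differentiableAt.differentiableWithinAt
  · intro y hy
    rw [interior_Ioc] at hy
    have h := hsub y ⟨hy.1, hy.2.le⟩
    rw [(aux_F_deriv y hy.1.ne' h.2.ne').deriv]
    apply div_nonneg _ (by positivity)
    have hphi := aux_phi_nonneg y h.1
    have hexp : (-((Real.cos y)⁻¹ * (-Real.sin y)) * y ^ 2
        - (- Real.log (Real.cos y)) * (2 * y ^ 1))
        = y * (y * (Real.sin y / Real.cos y) + 2 * Real.log (Real.cos y)) := by
      field_simp
      ring
    rw [hexp]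
    exact mul_nonneg hy.1.le hphi

theorem stmt_17 (p : ℝ) (hp : 2 ≤ p) :
    Real.cos (π / (2 * p)) ^ (p - 1) ≥ (2 : ℝ) ^ (-(1 : ℝ) / 2) := by
  have hπ := Real.pi_pos
  have hp0 : 0 < p := by linarith
  set x := π / (2 * p) with hxdef
  have hx0 : 0 < x := by positivity
  have hx4 : x ≤ π / 4 := by
    rw [hxdef, div_le_div_iff₀ (by positivity) (by norm_num)]
    nlinarith
  have hx2 : x < π / 2 := lt_of_le_of_lt hx4 (by linarith)
  have hcx : 0 < Real.cos x := Real.cos_pos_of_mem_Ioo ⟨by linarith, hx2⟩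
  -- F x ≤ F (π/4)
  have hFmono : (- Real.log (Real.cos x)) / x ^ 2
      ≤ (- Real.log (Real.cos (π/4))) / (π/4) ^ 2 :=
    aux_F_mono (Set.mem_Ioc.mpr ⟨hx0, hx4⟩)
      (Set.mem_Ioc.mpr ⟨by linarith, le_refl _⟩) hx4
  have hFpi4 : (- Real.log (Real.cos (π/4))) / (π/4) ^ 2 = 8 * Real.log 2 / π ^ 2 := by
    rw [Real.cos_pi_div_four]
    rw [show Real.sqrt 2 / 2 = Real.sqrt 2 / 2 from rfl]
    have : Real.log (Real.sqrt 2 / 2) = Real.log 2 / 2 - Real.log 2 := by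
      rw [Real.log_div (by positivity) (by norm_num), Real.log_sqrt (by norm_num)]
    rw [this]
    field_simp
    ring
  rw [hFpi4] at hFmono
  -- so  - log (cos x) ≤ 2 log 2 / p^2
  have hkey : - Real.log (Real.cos x) ≤ 2 * Real.log 2 / p ^ 2 := by
    have hx2pos : (0:ℝ) < x ^ 2 := by positivity
    have := (div_le_iff₀ hx2pos).mp hFmono
    have hxsq : x ^ 2 = π ^ 2 / (4 * p ^ 2) := by
      rw [hxdef]; field_simp; ring
    rw [hxsq] at this
    calc - Real.log (Real.cos x) ≤ 8 * Real.log 2 / π ^ 2 * (π ^ 2 / (4 * p ^ 2)) := this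
      _ = 2 * Real.log 2 / p ^ 2 := by field_simp; ring
  -- conclude by taking logs
  have hlog2 : 0 ≤ Real.log 2 := Real.log_nonneg (by norm_num)
  have hlhs : Real.log (Real.cos x ^ (p - 1)) = (p - 1) * Real.log (Real.cos x) :=
    Real.log_rpow hcx _
  have hrhs : Real.log ((2:ℝ) ^ (-(1:ℝ)/2)) = (-(1:ℝ)/2) * Real.log 2 :=
    Real.log_rpow (by norm_num) _
  have hloggoal : Real.log ((2:ℝ) ^ (-(1:ℝ)/2)) ≤ Real.log (Real.cos x ^ (p - 1)) := by
    rw [hlhs, hrhs]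
    have h1 : (p - 1) * (- Real.log (Real.cos x)) ≤ (p - 1) * (2 * Real.log 2 / p ^ 2) :=
      mul_le_mul_of_nonneg_left hkey (by linarith)
    have h2 : (p - 1) * (2 * Real.log 2 / p ^ 2) ≤ (1/2) * Real.log 2 := by
      have hfrac : (p - 1) * (2 * Real.log 2 / p ^ 2) = (2*(p-1)/p^2) * Real.log 2 := by
        field_simp
      have hq : 2*(p-1)/p^2 ≤ 1/2 := by
        rw [div_le_iff₀ (by positivity)]
        nlinarith
      rw [hfrac]
      exact mul_le_mul_of_nonneg_right hq hlog2
    nlinarith [h1, h2]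
  have h2pos : (0:ℝ) < (2:ℝ) ^ (-(1:ℝ)/2) := Real.rpow_pos_of_pos (by norm_num) _
  have hcpos : (0:ℝ) < Real.cos x ^ (p - 1) := Real.rpow_pos_of_pos hcx _
  calc (2:ℝ) ^ (-(1:ℝ)/2) = Real.exp (Real.log ((2:ℝ) ^ (-(1:ℝ)/2))) := (Real.exp_log h2pos).symm
    _ ≤ Real.exp (Real.log (Real.cos x ^ (p - 1))) := Real.exp_le_exp.mpr hloggoal
    _ = Real.cos x ^ (p - 1) := Real.exp_log hcpos
end
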